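/- arXiv:2502.02799 — 8 statements merged into one kernel-verified Lean document; each statement's English description precedes it below -/
import Mathlib

section
/- Let C ⊆ F_2^n be a linear code of dimension k. Then there exist at least 2^(n−k) distinct subsets S ⊆ [n] that are unweighted one-sided 1/2-sparsifiers of C. -/
/-- The Hamming weight of the projection of `c` onto the coordinates in `S`,
i.e. the number of coordinates `i ∈ S` with `c i ≠ 0`. -/
def wtOn {n : ℕ} (S : Finset (Fin n)) (c : Fin n → ZMod 2) : ℕ :=
  (S.filter fun i => c i ≠ 0).card

/-- `S` is an unweighted one-sided `α`-sparsifier of the linear code `C` if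
for all codewords `c ∈ C`, `wt(c_S) ≥ α · wt(c)`. -/
def IsSparsifier {n : ℕ} (C : Submodule (ZMod 2) (Fin n → ZMod 2)) (α : ℝ)
    (S : Finset (Fin n)) : Prop :=
  ∀ c ∈ C, α * (hammingNorm c : ℝ) ≤ (wtOn S c : ℝ)

open Finset

lemma key_count {n : ℕ} (x c : Fin n → ZMod 2)
    (h : hammingNorm x ≤ hammingNorm (x + c)) :
    hammingNorm c ≤ 2 * wtOn (Finset.univ.filter fun i => x i = 0) c := by
  classical
  set A := Finset.univ.filter fun i : Fin n => c i ≠ 0 ∧ x i ≠ 0 with hA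
  set B := Finset.univ.filter fun i : Fin n => c i ≠ 0 ∧ x i = 0 with hB
  set R := Finset.univ.filter fun i : Fin n => c i = 0 ∧ x i ≠ 0 with hR
  have hc : hammingNorm c = A.card + B.card := by
    rw [hammingNorm]
    rw [← Finset.card_filter_add_card_filter_not (s := Finset.univ.filter fun i => c i ≠ 0)
      (p := fun i => x i ≠ 0)]
    rw [Finset.filter_filter, Finset.filter_filter]
    congr 2
    ext i
    simp [hB, not_not, and_comm]
  have hx : hammingNorm x = A.card + R.card := by
    rw [hammingNorm]
    rw [← Finset.card_filter_add_card_filter_not (s := Finset.univ.filter fun i => x i ≠ 0)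
      (p := fun i => c i ≠ 0)]
    rw [Finset.filter_filter, Finset.filter_filter]
    congr 2
    · ext i; simp [hA, and_comm]
    · ext i; simp [hR, not_not, and_comm]
  have hxc : hammingNorm (x + c) = B.card + R.card := by
    have hset : (Finset.univ.filter fun i => (x + c) i ≠ 0) = B ∪ R := by
      ext i
      simp only [hB, hR, Finset.mem_union, Finset.mem_filter, Finset.mem_univ, true_and,
        Pi.add_apply]
      revert h
      generalize x i = a
      generalize c i = b
      intro _
      revert a b
      decide
    have hdisj : Disjoint B R := by
      rw [Finset.disjoint_left]
      intro i hi hi'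
      simp only [hB, hR, Finset.mem_filter] at hi hi'
      exact hi.2.1 hi'.2.1
    rw [hammingNorm, hset, Finset.card_union_of_disjoint hdisj]
  have hw : wtOn (Finset.univ.filter fun i => x i = 0) c = B.card := by
    rw [wtOn, Finset.filter_filter]
    congr 1
    ext i
    simp [hB, and_comm]
  omega

lemma zmod2_eq_of_zero_iff {a b : ZMod 2} (h : a = 0 ↔ b = 0) : a = b := by
  revert h
  revert a b
  decide

/-- Any `k`-dimensional linear code `C ⊆ 𝔽₂ⁿ` has at least `2^(n-k)` distinct
unweighted one-sided `1/2`-sparsifiers. -/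
theorem num_half_sparsifiers (n k : ℕ) (C : Submodule (ZMod 2) (Fin n → ZMod 2))
    (hk : Module.finrank (ZMod 2) C = k) :
    2 ^ (n - k) ≤ {S : Finset (Fin n) | IsSparsifier C (1 / 2) S}.ncard := by
  classical
  -- minimum weight representative of each coset
  have exists_rep : ∀ q : (Fin n → ZMod 2) ⧸ C, ∃ x : Fin n → ZMod 2,
      Submodule.Quotient.mk x = q ∧
      ∀ y : Fin n → ZMod 2, Submodule.Quotient.mk y = q →
        hammingNorm x ≤ hammingNorm y := by
    intro q
    obtain ⟨z, hz⟩ := q.exists_rep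
    have hne : (Finset.univ.filter fun y : Fin n → ZMod 2 =>
        Submodule.Quotient.mk y = q).Nonempty := ⟨z, by simp only [Finset.mem_filter, Finset.mem_univ, true_and]; exact hz⟩
    obtain ⟨x, hx, hmin⟩ := Finset.exists_min_image _ hammingNorm hne
    simp only [Finset.mem_filter, Finset.mem_univ, true_and] at hx
    exact ⟨x, hx, fun y hy => hmin y (by simpa using hy)⟩
  choose r hr hrmin using exists_rep
  -- the sparsifier associated to each coset
  set f : ((Fin n → ZMod 2) ⧸ C) → Finset (Fin n) :=
    fun q => Finset.univ.filter fun i => r q i = 0 with hf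
  have hsp : ∀ q, IsSparsifier C (1 / 2) (f q) := by
    intro q c hc
    have hmk : Submodule.Quotient.mk (r q + c) = q := by
      have : Submodule.Quotient.mk (r q + c) = (Submodule.Quotient.mk (r q) : (Fin n → ZMod 2) ⧸ C) :=
        (Submodule.Quotient.eq C).2 (by simpa using hc)
      rw [this, hr q]
    have hle := hrmin q (r q + c) hmk
    have hkey := key_count (r q) c hle
    rw [hf]
    have : (hammingNorm c : ℝ) ≤ 2 * (wtOn (Finset.univ.filter fun i => r q i = 0) c : ℝ) := by
      exact_mod_cast hkey
    linarith
  have hinj : Function.Injective f := by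
    intro q₁ q₂ hq
    have hreq : r q₁ = r q₂ := by
      funext i
      apply zmod2_eq_of_zero_iff
      constructor
      · intro h0
        have : i ∈ f q₁ := by simp [hf, h0]
        rw [hq] at this
        simpa [hf] using this
      · intro h0
        have : i ∈ f q₂ := by simp [hf, h0]
        rw [← hq] at this
        simpa [hf] using this
    rw [← hr q₁, ← hr q₂, hreq]
  -- counting
  have hkn : k ≤ n := by
    rw [← hk]
    have := Submodule.finrank_le C
    simpa using this
  have hfr : Module.finrank (ZMod 2) ((Fin n → ZMod 2) ⧸ C) = n - k := by
    have h1 := Submodule.finrank_quotient_add_finrank C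
    rw [hk] at h1
    have h2 : Module.finrank (ZMod 2) (Fin n → ZMod 2) = n := by
      simp [Module.finrank_fin_fun]
    omega
  have hcard : Nat.card ((Fin n → ZMod 2) ⧸ C) = 2 ^ (n - k) := by
    rw [Nat.card_eq_fintype_card, Module.card_eq_pow_finrank (K := ZMod 2), hfr, ZMod.card]
  -- map into the subtype
  set g : ((Fin n → ZMod 2) ⧸ C) →
      {S : Finset (Fin n) // S ∈ {S : Finset (Fin n) | IsSparsifier C (1 / 2) S}} :=
    fun q => ⟨f q, hsp q⟩ with hg
  have hginj : Function.Injective g := by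
    intro a b hab
    apply hinj
    simpa [hg] using congrArg Subtype.val hab
  have hle := Nat.card_le_card_of_injective g hginj
  rw [hcard] at hle
  rwa [Nat.card_coe_set_eq] at hle
end

section
/- Let C ⊆ F_2^n be a linear code of dimension k. If S ⊆ [n] is chosen uniformly at random among all 2^n subsets of [n], then the probability that S is an unweighted one-sided 1/2-sparsifier of C is at least 2^(−k). -/
/-- Support of a vector, as a Finset. -/
def suppF {n : ℕ} (x : Fin n → ZMod 2) : Finset (Fin n) :=
  Finset.univ.filter fun i => x i ≠ 0

lemma suppF_injective {n : ℕ} : Function.Injective (suppF (n := n)) := by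
  intro x y h
  funext i
  have hiff : (i ∈ suppF x) ↔ (i ∈ suppF y) := by rw [h]
  simp only [suppF, Finset.mem_filter, Finset.mem_univ, true_and] at hiff
  have : ∀ a b : ZMod 2, (a ≠ 0 ↔ b ≠ 0) → a = b := by decide
  exact this _ _ hiff

/-- Key identity: `wt(x+c) + 2·wt((x∧c)) = wt(x) + wt(c)`. -/
lemma key_identity {n : ℕ} (x c : Fin n → ZMod 2) :
    hammingNorm (x + c) + 2 * wtOn (suppF x) c = hammingNorm x + hammingNorm c := by
  classical
  have h : ∀ i : Fin n,
      (if (x + c) i ≠ 0 then 1 else 0) + 2 * (if x i ≠ 0 ∧ c i ≠ 0 then 1 else 0)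
        = (if x i ≠ 0 then 1 else 0) + (if c i ≠ 0 then 1 else 0) := by
    intro i
    have : ∀ a b : ZMod 2,
        (if a + b ≠ 0 then 1 else 0) + 2 * (if a ≠ 0 ∧ b ≠ 0 then 1 else 0)
          = (if a ≠ 0 then 1 else 0) + (if b ≠ 0 then 1 else 0) := by decide
    exact this (x i) (c i)
  have hwt : wtOn (suppF x) c
      = (Finset.univ.filter fun i => x i ≠ 0 ∧ c i ≠ 0).card := by
    rw [wtOn, suppF, Finset.filter_filter]
  simp only [hammingNorm, hwt, Finset.card_filter, Pi.add_apply]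
  rw [Finset.mul_sum, ← Finset.sum_add_distrib, ← Finset.sum_add_distrib]
  exact Finset.sum_congr rfl fun i _ => h i

lemma exists_good_in_coset {n : ℕ} (C : Submodule (ZMod 2) (Fin n → ZMod 2))
    (q : (Fin n → ZMod 2) ⧸ C) :
    ∃ x : Fin n → ZMod 2, Submodule.Quotient.mk x = q ∧ IsSparsifier C (1 / 2) (suppF x) := by
  classical
  obtain ⟨x, hx, hmax⟩ := Finset.exists_max_image
    (Finset.univ.filter fun y : Fin n → ZMod 2 => Submodule.Quotient.mk y = q)
    hammingNorm ⟨q.out, by simp only [Finset.mem_filter, Finset.mem_univ, true_and]; exact Quotient.out_eq q⟩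
  simp only [Finset.mem_filter, Finset.mem_univ, true_and] at hx
  refine ⟨x, hx, ?_⟩
  intro c hc
  have hxc : Submodule.Quotient.mk (x + c) = q := by
    rw [← hx]
    exact (Submodule.Quotient.eq C).2 (by simpa using hc)
  have hle : hammingNorm (x + c) ≤ hammingNorm x :=
    hmax _ (by simp [hxc])
  have hkey := key_identity x c
  have hnat : hammingNorm c ≤ 2 * wtOn (suppF x) c := by omega
  rw [div_mul_eq_mul_div, div_le_iff₀ (by norm_num)]
  calc (1 : ℝ) * (hammingNorm c : ℝ) = (hammingNorm c : ℝ) := by ring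
    _ ≤ ((2 * wtOn (suppF x) c : ℕ) : ℝ) := by exact_mod_cast hnat
    _ = (wtOn (suppF x) c : ℝ) * 2 := by push_cast; ring

/-- If `S ⊆ [n]` is chosen uniformly at random among all `2^n` subsets, the
probability that `S` is an unweighted one-sided `1/2`-sparsifier of a
`k`-dimensional linear code `C` is at least `2^(-k)`. -/
theorem prob_half_sparsifier (n k : ℕ) (C : Submodule (ZMod 2) (Fin n → ZMod 2))
    (hk : Module.finrank (ZMod 2) C = k) :
    (2 : ℝ) ^ (-(k : ℤ)) ≤
      ({S : Finset (Fin n) | IsSparsifier C (1 / 2) S}.ncard : ℝ) / 2 ^ n := by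
  classical
  set V := Fin n → ZMod 2
  set G : Set (Finset (Fin n)) := {S : Finset (Fin n) | IsSparsifier C (1 / 2) S}
  -- choose a good representative in each coset
  choose f hf1 hf2 using exists_good_in_coset C
  -- injection from the quotient into G
  have hinj : Function.Injective fun q : V ⧸ C => (⟨suppF (f q), hf2 q⟩ : G) := by
    intro q q' h
    have : suppF (f q) = suppF (f q') := congrArg Subtype.val h
    have := suppF_injective this
    rw [← hf1 q, ← hf1 q', this]
  have hcard : Nat.card (V ⧸ C) ≤ G.ncard := by
    rw [← Nat.card_coe_set_eq]
    exact Nat.card_le_card_of_injective _ hinj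
  -- cardinalities
  have hC : Nat.card C = 2 ^ k := by
    rw [Nat.card_eq_fintype_card, Module.card_eq_pow_finrank (K := ZMod 2) (V := C), hk, ZMod.card]
  have hV : Nat.card V = 2 ^ n := by
    rw [Nat.card_eq_fintype_card]
    simp [V, ZMod.card]
  have hsplit := Submodule.card_eq_card_quotient_mul_card C
  rw [hV, hC] at hsplit
  -- so Nat.card (V ⧸ C) * 2^k = 2^n
  have hq : 2 ^ k * Nat.card (V ⧸ C) = 2 ^ n := hsplit.symm
  -- real arithmetic
  have h2n : (0 : ℝ) < 2 ^ n := by positivity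
  rw [le_div_iff₀ h2n]
  have : (2 : ℝ) ^ (-(k : ℤ)) * 2 ^ n = (Nat.card (V ⧸ C) : ℝ) := by
    have h2 : ((2 : ℝ) ^ k) * (Nat.card (V ⧸ C) : ℝ) = 2 ^ n := by exact_mod_cast hq
    have hkpos : (0 : ℝ) < 2 ^ k := by positivity
    rw [zpow_neg, zpow_natCast, inv_mul_eq_div, div_eq_iff hkpos.ne']
    linarith
  rw [this]
  exact_mod_cast hcard
end

section
/- Let C ⊆ F_2^n be a linear code, identify subsets of [n] with their indicator vectors in F_2^n, and let S* ⊆ [n] be such that |S*| ≥ |S* + c| for every codeword c ∈ C (i.e., S* has maximum size in its coset S* + C of the quotient F_2^n/C). Then S* is an unweighted one-sided 1/2-sparsifier of C: for every c ∈ C, wt(c_{S*}) ≥ wt(c)/2. -/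
/-- The indicator vector in `𝔽₂ⁿ` of a subset `S ⊆ [n]`. -/
def indicatorVec {n : ℕ} (S : Finset (Fin n)) : Fin n → ZMod 2 :=
  fun i => if i ∈ S then 1 else 0

/-- If `S*` has maximum size in its coset `S* + C` (i.e. `|S*| ≥ |S* + c|` for
every `c ∈ C`, where sets are identified with their indicator vectors), then
`S*` is an unweighted one-sided `1/2`-sparsifier of `C`. -/
theorem max_in_coset_is_sparsifier (n : ℕ) (C : Submodule (ZMod 2) (Fin n → ZMod 2))
    (S : Finset (Fin n))
    (hmax : ∀ c ∈ C, hammingNorm (indicatorVec S + c) ≤ S.card) :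
    IsSparsifier C (1 / 2) S := by
  intro c hc
  classical
  set T : Finset (Fin n) := Finset.univ.filter (fun i => c i ≠ 0) with hT
  have hnorm : hammingNorm c = T.card := by
    simp [hammingNorm, hT]
  have hw : wtOn S c = (S ∩ T).card := by
    rw [wtOn, hT, ← Finset.filter_mem_eq_inter]
    exact congrArg Finset.card (Finset.filter_congr (fun i hi => by simp))
  have hkey : hammingNorm (indicatorVec S + c) = ((S \ T) ∪ (T \ S)).card := by
    rw [hammingNorm]
    congr 1
    ext i
    rw [Finset.mem_filter]
    simp only [Finset.mem_filter, Finset.mem_union, Finset.mem_sdiff, Finset.mem_univ,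
      true_and, Pi.add_apply, indicatorVec, hT]
    by_cases hiS : i ∈ S <;> simp only [hiS, if_true, if_false] <;>
      · generalize c i = a
        revert a
        decide
  have hdisj : Disjoint (S \ T) (T \ S) := by
    exact disjoint_sdiff_sdiff
  have hcard : ((S \ T) ∪ (T \ S)).card = (S \ T).card + (T \ S).card :=
    Finset.card_union_of_disjoint hdisj
  have hS : (S ∩ T).card + (S \ T).card = S.card := Finset.card_inter_add_card_sdiff S T
  have hTc : (T ∩ S).card + (T \ S).card = T.card := Finset.card_inter_add_card_sdiff T S
  have hcomm : (T ∩ S).card = (S ∩ T).card := by rw [Finset.inter_comm]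
  have h := hmax c hc
  rw [hkey, hcard] at h
  have : T.card ≤ 2 * (S ∩ T).card := by omega
  rw [hnorm, hw]
  have := (Nat.cast_le (α := ℝ)).2 this
  push_cast at this ⊢
  linarith
end

section
/- Let C ⊆ F_2^n be a linear code of dimension k, and let ε ∈ (0, 1/2) satisfy H(1/2 − ε) < 1 − k/n, where H is the binary entropy function. Then C has an unweighted one-sided 1/2-sparsifier S ⊆ [n] with |S| ≤ n(1/2 + ε). -/
/-- The binary entropy function `H(x) = x log₂(1/x) + (1-x) log₂(1/(1-x))`.
(Note that in Lean `1/0 = 0` and `logb 2 0 = 0`, so `H 0 = H 1 = 0` holds.) -/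
noncomputable def binEnt (x : ℝ) : ℝ :=
  x * Real.logb 2 (1 / x) + (1 - x) * Real.logb 2 (1 / (1 - x))

namespace SparsifierProofAux

open Finset Real

lemma z1 (a b : ZMod 2) : a ≠ b ↔ a + b ≠ 0 := by revert a b; decide

lemma z2 (a : ZMod 2) (h : a ≠ 0) : a = 1 := by revert h; revert a; decide

lemma z3 (a b : ZMod 2) : a + b ≠ 0 ↔ ((a ≠ 0 ∧ ¬ b ≠ 0) ∨ (b ≠ 0 ∧ ¬ a ≠ 0)) := by
  revert a b; decide

/-- The support of a vector over `ZMod 2`. -/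
def supp {n : ℕ} (v : Fin n → ZMod 2) : Finset (Fin n) := {i | v i ≠ 0}

lemma supp_card {n : ℕ} (v : Fin n → ZMod 2) : hammingNorm v = (supp v).card := rfl

lemma dist_norm {n : ℕ} (x y : Fin n → ZMod 2) : hammingDist x y = hammingNorm (x + y) := by
  unfold hammingDist hammingNorm
  congr 1
  apply Finset.filter_congr
  intro i _
  simpa using z1 (x i) (y i)

lemma supp_add {n : ℕ} (v w : Fin n → ZMod 2) :
    supp (v + w) = (supp v \ supp w) ∪ (supp w \ supp v) := by
  ext i
  simp only [supp, mem_filter, mem_univ, true_and, mem_union, mem_sdiff, Pi.add_apply]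
  exact z3 (v i) (w i)

lemma supp_inj {n : ℕ} : Function.Injective (supp (n := n)) := by
  intro x y h
  funext i
  by_cases hx : x i = 0 <;> by_cases hy : y i = 0
  · rw [hx, hy]
  · exact absurd (h ▸ (by simp [supp, hy] : i ∈ supp y)) (by simp [supp, hx])
  · exact absurd ((by simp [supp, hx] : i ∈ supp x)) (by simp [h ▸ (by simp [supp, hy] : i ∉ supp y)])
  · rw [z2 _ hx, z2 _ hy]

lemma add_self' {n : ℕ} (v : Fin n → ZMod 2) : v + v = 0 := by
  funext i
  have h : ∀ a : ZMod 2, a + a = 0 := by decide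
  exact h (v i)

lemma add_add_cancel {n : ℕ} (v c : Fin n → ZMod 2) : v + c + c = v := by
  rw [add_assoc, add_self', add_zero]

lemma card_ball_le {n : ℕ} (r : ℕ) :
    ({x : Fin n → ZMod 2 | hammingNorm x < r} : Finset _).card ≤ ∑ j ∈ range r, n.choose j := by
  classical
  have h1 : ({x : Fin n → ZMod 2 | hammingNorm x < r} : Finset _).card
      ≤ ((range r).biUnion (fun j => Finset.powersetCard j (univ : Finset (Fin n)))).card := by
    apply Finset.card_le_card_of_injOn supp
    · intro x hx
      simp only [mem_coe, mem_filter, mem_univ, true_and] at hx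
      simp only [mem_coe, mem_biUnion, mem_range, mem_powersetCard]
      exact ⟨hammingNorm x, hx, subset_univ _, (supp_card x).symm⟩
    · exact fun x _ y _ h => supp_inj h
  refine h1.trans (Finset.card_biUnion_le.trans ?_)
  apply Finset.sum_le_sum
  intro j _
  rw [Finset.card_powersetCard, card_univ, Fintype.card_fin]

lemma myBall_eq {n : ℕ} (c : Fin n → ZMod 2) (r : ℕ) :
    ({x : Fin n → ZMod 2 | hammingDist x c < r} : Finset _)
      = ({x : Fin n → ZMod 2 | hammingNorm x < r} : Finset _).image (· + c) := by
  ext y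
  simp only [mem_filter, mem_univ, true_and, mem_image]
  constructor
  · intro h
    exact ⟨y + c, by rwa [← dist_norm], add_add_cancel y c⟩
  · rintro ⟨x, hx, rfl⟩
    rwa [dist_norm, add_add_cancel]

lemma card_ball_center_le {n : ℕ} (c : Fin n → ZMod 2) (r : ℕ) :
    ({x : Fin n → ZMod 2 | hammingDist x c < r} : Finset _).card ≤ ∑ j ∈ range r, n.choose j := by
  rw [myBall_eq]
  refine le_trans (le_of_eq (Finset.card_image_of_injective _ ?_)) (card_ball_le r)
  intro a b h
  have := congrArg (· + c) h
  simpa [add_add_cancel] using this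

lemma exists_far {n k : ℕ} (C : Submodule (ZMod 2) (Fin n → ZMod 2))
    (hk : Module.finrank (ZMod 2) C = k) (r : ℕ)
    (hcard : ((2:ℝ))^(k:ℕ) * (∑ j ∈ range r, (n.choose j : ℝ)) < 2^(n:ℕ)) :
    ∃ x : Fin n → ZMod 2, ∀ c ∈ C, r ≤ hammingDist x c := by
  classical
  set B : Finset (Fin n → ZMod 2) :=
    (Finset.univ : Finset C).biUnion
      (fun c => {x : Fin n → ZMod 2 | hammingDist x (c : Fin n → ZMod 2) < r}) with hB
  have hCcard : Fintype.card C = 2 ^ k := by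
    rw [Module.card_eq_pow_finrank (K := ZMod 2) (V := C), hk, ZMod.card 2]
  have hBn : (B.card : ℝ) < ((Finset.univ : Finset (Fin n → ZMod 2)).card : ℝ) := by
    have h1 : B.card ≤ Fintype.card C * (∑ j ∈ range r, n.choose j) := by
      refine Finset.card_biUnion_le.trans ?_
      refine le_trans (Finset.sum_le_card_nsmul _ _ (∑ j ∈ range r, n.choose j)
        (fun c _ => card_ball_center_le _ r)) ?_
      simp [Finset.card_univ]
    have h2 : ((Finset.univ : Finset (Fin n → ZMod 2)).card : ℝ) = 2 ^ n := by
      rw [Finset.card_univ]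
      simp [Fintype.card_fun]
    rw [h2]
    calc (B.card : ℝ) ≤ (Fintype.card C * (∑ j ∈ range r, n.choose j) : ℕ) := by exact_mod_cast h1
      _ = (2:ℝ)^k * (∑ j ∈ range r, (n.choose j : ℝ)) := by
          push_cast [hCcard]; ring
      _ < 2 ^ n := hcard
  have hex : ∃ x, x ∉ B := by
    by_contra h
    push_neg at h
    rw [Finset.eq_univ_iff_forall.mpr h] at hBn
    exact lt_irrefl _ hBn
  obtain ⟨x, hx⟩ := hex
  refine ⟨x, fun c hc => ?_⟩
  by_contra hlt
  push_neg at hlt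
  exact hx (Finset.mem_biUnion.mpr ⟨⟨c, hc⟩, Finset.mem_univ _, by simp [hlt]⟩)

lemma sum_choose_le_entropy {n r : ℕ} (p : ℝ) (hp0 : 0 < p) (hp : p ≤ 1/2)
    (hrn : r ≤ n + 1) (hr : ∀ j, j < r → (j : ℝ) ≤ p * n) :
    (∑ j ∈ range r, (n.choose j : ℝ)) ≤ (2:ℝ) ^ ((n:ℝ) * binEnt p) := by
  set q : ℝ := 1 - p with hqdef
  have hq0 : 0 < q := by simp only [hqdef]; linarith
  have hpq : p ≤ q := by simp only [hqdef]; linarith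
  have hc0 : 0 < p / q := div_pos hp0 hq0
  have hc1 : p / q ≤ 1 := (div_le_one hq0).mpr hpq
  set A : ℝ := q ^ (n:ℝ) * (p/q) ^ (p * (n:ℝ)) with hAdef
  have hA0 : 0 < A := mul_pos (rpow_pos_of_pos hq0 _) (rpow_pos_of_pos hc0 _)
  have step1 : ∀ j ∈ range r, (n.choose j : ℝ) * A ≤ (n.choose j : ℝ) * (p ^ j * q ^ (n - j)) := by
    intro j hj
    rw [mem_range] at hj
    have hjpn : (j:ℝ) ≤ p * n := hr j hj
    have hjn : j ≤ n := by
      by_contra h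
      push_neg at h
      have : (n:ℝ) < (j:ℝ) := by exact_mod_cast h
      nlinarith [Nat.cast_nonneg (α := ℝ) n]
    have h1 : A ≤ q ^ (n:ℝ) * (p/q) ^ (j:ℝ) :=
      mul_le_mul_of_nonneg_left (rpow_le_rpow_of_exponent_ge hc0 hc1 hjpn)
        (rpow_nonneg hq0.le _)
    have h2 : q ^ (n:ℝ) * (p/q) ^ (j:ℝ) = p ^ j * q ^ (n - j) := by
      rw [rpow_natCast, rpow_natCast, div_pow]
      have hqj : q ^ (n - j) * q ^ j = q ^ n := by rw [← pow_add]; congr 1; omega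
      field_simp
      rw [← hqj]; ring
    exact mul_le_mul_of_nonneg_left (h2 ▸ h1) (Nat.cast_nonneg _)
  have hsum : (∑ j ∈ range r, (n.choose j : ℝ)) * A ≤ 1 := by
    rw [Finset.sum_mul]
    calc ∑ j ∈ range r, (n.choose j:ℝ) * A
        ≤ ∑ j ∈ range r, (n.choose j:ℝ) * (p^j * q^(n-j)) := Finset.sum_le_sum step1
      _ ≤ ∑ j ∈ range (n+1), (n.choose j:ℝ) * (p^j * q^(n-j)) :=
          Finset.sum_le_sum_of_subset_of_nonneg (Finset.range_subset_range.mpr hrn)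
            (fun i _ _ => mul_nonneg (Nat.cast_nonneg _)
              (mul_nonneg (pow_nonneg hp0.le _) (pow_nonneg hq0.le _)))
      _ = (p + q)^n := by
          rw [add_pow]
          exact Finset.sum_congr rfl (fun j _ => by ring)
      _ = 1 := by
          have : p + q = 1 := by simp [hqdef]
          rw [this, one_pow]
  have hA : A = (2:ℝ) ^ (-((n:ℝ) * binEnt p)) := by
    have e1 : (2:ℝ) ^ (Real.logb 2 p * (p * (n:ℝ))) = p ^ (p * (n:ℝ)) := by
      rw [Real.rpow_mul (by norm_num : (0:ℝ) ≤ 2), Real.rpow_logb two_pos (by norm_num) hp0]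
    have e2 : (2:ℝ) ^ (Real.logb 2 q * ((1-p) * (n:ℝ))) = q ^ ((1-p) * (n:ℝ)) := by
      rw [Real.rpow_mul (by norm_num : (0:ℝ) ≤ 2), Real.rpow_logb two_pos (by norm_num) hq0]
    have hexp : -((n:ℝ) * binEnt p)
        = Real.logb 2 p * (p * (n:ℝ)) + Real.logb 2 q * ((1-p) * (n:ℝ)) := by
      unfold binEnt
      rw [one_div, one_div, Real.logb_inv, Real.logb_inv]
      simp only [← hqdef]
      ring
    rw [hexp, Real.rpow_add two_pos, e1, e2, hAdef, Real.div_rpow hp0.le hq0.le]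
    rw [mul_comm (q ^ (n:ℝ)), div_mul_eq_mul_div, mul_div_assoc, ← Real.rpow_sub hq0]
    congr 1
    ring
  have hfin : (∑ j ∈ range r, (n.choose j : ℝ)) ≤ A⁻¹ := by
    rw [← one_div]
    exact (le_div_iff₀ hA0).mpr hsum
  calc (∑ j ∈ range r, (n.choose j : ℝ)) ≤ A⁻¹ := hfin
    _ = (2:ℝ) ^ ((n:ℝ) * binEnt p) := by rw [hA, ← Real.rpow_neg (by norm_num), neg_neg]

end SparsifierProofAux

open SparsifierProofAux Finset Real in
/-- If `ε ∈ (0, 1/2)` satisfies `H(1/2 - ε) < 1 - k/n`, then a `k`-dimensional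
linear code `C ⊆ 𝔽₂ⁿ` has an unweighted one-sided `1/2`-sparsifier of size at
most `n(1/2 + ε)`. -/
theorem small_half_sparsifier_entropy (n k : ℕ) (C : Submodule (ZMod 2) (Fin n → ZMod 2))
    (hk : Module.finrank (ZMod 2) C = k) (ε : ℝ) (hε : ε ∈ Set.Ioo 0 (1 / 2 : ℝ))
    (hH : binEnt (1 / 2 - ε) < 1 - (k : ℝ) / n) :
    ∃ S : Finset (Fin n), IsSparsifier C (1 / 2) S ∧ (S.card : ℝ) ≤ n * (1 / 2 + ε) := by
  classical
  obtain ⟨hε0, hε2⟩ := hε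
  -- the trivial case `n = 0`
  rcases Nat.eq_zero_or_pos n with hn | hn
  · refine ⟨∅, fun c _ => ?_, by simp [hn]⟩
    have hc0 : hammingNorm c = 0 :=
      Nat.le_zero.mp (le_trans (Finset.card_filter_le _ _) (by simp [hn]))
    simp [wtOn, hc0]
  have hn' : (0:ℝ) < n := by exact_mod_cast hn
  set p : ℝ := 1/2 - ε with hpdef
  have hp0 : 0 < p := by simp only [hpdef]; linarith
  have hp2 : p ≤ 1/2 := by simp only [hpdef]; linarith
  set r : ℕ := ⌈p * n⌉₊ with hrdef
  have hpn : p * (n:ℝ) ≤ (n:ℝ) := by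
    rw [hpdef]
    nlinarith
  have hrn : r ≤ n := Nat.ceil_le.mpr hpn
  have hrj : ∀ j, j < r → (j:ℝ) ≤ p * n := fun j hj => (Nat.lt_ceil.mp hj).le
  -- counting bound
  have hV : (∑ j ∈ range r, (n.choose j : ℝ)) ≤ (2:ℝ) ^ ((n:ℝ) * binEnt p) :=
    sum_choose_le_entropy p hp0 hp2 (hrn.trans (Nat.le_succ n)) hrj
  have hcard : ((2:ℝ))^(k:ℕ) * (∑ j ∈ range r, (n.choose j : ℝ)) < 2^(n:ℕ) := by
    have hHn : (n:ℝ) * binEnt p < (n:ℝ) - k := by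
      have h1 : (n:ℝ) * binEnt p < (n:ℝ) * (1 - (k:ℝ)/n) := by
        exact (mul_lt_mul_iff_right₀ hn').mpr hH
      have h2 : (n:ℝ) * (1 - (k:ℝ)/n) = (n:ℝ) - k := by
        field_simp
      linarith
    calc ((2:ℝ))^(k:ℕ) * (∑ j ∈ range r, (n.choose j : ℝ))
        ≤ ((2:ℝ))^(k:ℕ) * (2:ℝ) ^ ((n:ℝ) * binEnt p) :=
          mul_le_mul_of_nonneg_left hV (by positivity)
      _ = (2:ℝ) ^ ((k:ℝ) + (n:ℝ) * binEnt p) := by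
          rw [Real.rpow_add two_pos, Real.rpow_natCast]
      _ < (2:ℝ) ^ ((n:ℝ)) := by
          apply Real.rpow_lt_rpow_of_exponent_lt (by norm_num)
          linarith
      _ = 2^(n:ℕ) := by rw [Real.rpow_natCast]
  obtain ⟨x, hx⟩ := exists_far C hk r hcard
  -- minimum-weight element of the coset `x + C`
  set M : Set ℕ := {m : ℕ | ∃ c ∈ C, hammingNorm (x + c) = m} with hMdef
  have hMne : M.Nonempty := ⟨hammingNorm (x + 0), 0, C.zero_mem, rfl⟩
  obtain ⟨c₀, hc₀C, hc₀⟩ := Nat.sInf_mem hMne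
  set x₀ : Fin n → ZMod 2 := x + c₀ with hx₀def
  have hmin : ∀ c ∈ C, hammingNorm x₀ ≤ hammingNorm (x₀ + c) := by
    intro c hc
    have h1 : x₀ + c = x + (c₀ + c) := by rw [hx₀def, add_assoc]
    rw [hx₀def, hc₀, h1]
    exact Nat.sInf_le ⟨c₀ + c, C.add_mem hc₀C hc, rfl⟩
  have hwt : r ≤ hammingNorm x₀ := by
    rw [hx₀def, ← dist_norm]
    exact hx c₀ hc₀C
  clear_value x₀
  set T : Finset (Fin n) := supp x₀ with hTdef
  refine ⟨Tᶜ, ?_, ?_⟩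
  · -- sparsifier property
    intro c hc
    set Sc : Finset (Fin n) := supp c with hScdef
    have hsets : Tᶜ.filter (fun i => c i ≠ 0) = Sc \ T := by
      ext i
      simp only [Finset.mem_filter, Finset.mem_compl, Finset.mem_sdiff, hScdef, supp,
        Finset.mem_filter, Finset.mem_univ, true_and]
      tauto
    have hwtOn : wtOn Tᶜ c = (Sc \ T).card := by
      unfold wtOn
      rw [hsets]
    have hkey : T.card ≤ (T \ Sc).card + (Sc \ T).card := by
      have h0 := hmin c hc
      rw [supp_card, supp_card, supp_add, ← hTdef, ← hScdef,
        Finset.card_union_of_disjoint (disjoint_sdiff_sdiff)] at h0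
      exact h0
    have e1 : (T \ Sc).card + (T ∩ Sc).card = T.card := Finset.card_sdiff_add_card_inter T Sc
    have e2 : (Sc \ T).card + (Sc ∩ T).card = Sc.card := Finset.card_sdiff_add_card_inter Sc T
    have e3 : (Sc ∩ T).card = (T ∩ Sc).card := by rw [Finset.inter_comm]
    have h2 : Sc.card ≤ 2 * (Sc \ T).card := by omega
    rw [hwtOn, supp_card, ← hScdef]
    have : (Sc.card : ℝ) ≤ 2 * ((Sc \ T).card : ℝ) := by exact_mod_cast h2
    linarith
  · -- size bound
    have hTn : T.card ≤ n := le_trans (Finset.card_le_univ T) (by simp)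
    have hTc : (Tᶜ.card : ℝ) = (n:ℝ) - T.card := by
      rw [Finset.card_compl, Fintype.card_fin, Nat.cast_sub hTn]
    have hrT' : r ≤ T.card := by
      rw [hTdef, ← supp_card]
      exact hwt
    have hrT : p * n ≤ (T.card : ℝ) :=
      le_trans (Nat.le_ceil _) (by exact_mod_cast hrT')
    have h5 : (n:ℝ) * (1/2 - ε) ≤ (T.card : ℝ) := by
      calc (n:ℝ) * (1/2 - ε) = p * n := by rw [hpdef]; ring
        _ ≤ _ := hrT
    rw [hTc]
    linarith
end

section
/- Let C ⊆ F_2^n be a linear code of dimension k with 0 < k ≤ n. Then C has an unweighted one-sided 1/2-sparsifier S ⊆ [n] with |S| ≤ n/2 + sqrt((ln 2)/2 · n·k). -/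
open Finset Real in
/-- Chernoff-type counting: the number of vectors of weight less than `n/2 - √((ln 2)/2·nk)`
is less than `2^(n-k)`. -/
private lemma bad_count (n k : ℕ) (hk0 : 0 < k) (hkn : k ≤ n) :
    ((Finset.univ.filter (fun y : Fin n → ZMod 2 =>
        (hammingNorm y : ℝ) < n / 2 - Real.sqrt (Real.log 2 / 2 * (n * k)))).card : ℝ) * 2 ^ k
      < 2 ^ n := by
  have hn : 0 < n := lt_of_lt_of_le hk0 hkn
  have hnR : (0:ℝ) < n := by exact_mod_cast hn
  set Bq : ℝ := Real.log 2 / 2 * (n * k) with hBq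
  have hBqpos : 0 < Bq := by
    have h2 : (0:ℝ) < Real.log 2 := Real.log_pos (by norm_num)
    have : (0:ℝ) < (n:ℝ) * k := by
      have hkR : (0:ℝ) < k := by exact_mod_cast hk0
      positivity
    positivity
  set B : ℝ := Real.sqrt Bq with hBdef
  have hBpos : 0 < B := Real.sqrt_pos.2 hBqpos
  have hB2 : B ^ 2 = Bq := Real.sq_sqrt hBqpos.le
  set lam : ℝ := 2 * B / n with hlam
  have hlampos : 0 < lam := by positivity
  set Bad : Finset (Fin n → ZMod 2) :=
    Finset.univ.filter (fun y => (hammingNorm y : ℝ) < n / 2 - B) with hBadDef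
  set g : ZMod 2 → ℝ := fun a => if a = 0 then Real.exp lam else Real.exp (-lam) with hg
  set F : (Fin n → ZMod 2) → ℝ :=
    fun y => Real.exp (lam * ((n:ℝ) - 2 * (hammingNorm y))) with hF
  -- product formula
  have hprod : ∀ y : Fin n → ZMod 2, (∏ i, g (y i)) = F y := by
    intro y
    have hwle : hammingNorm y ≤ n := by
      have h := Finset.card_filter_le Finset.univ (fun i => y i ≠ 0)
      simp only [Finset.card_univ, Fintype.card_fin] at h
      exact h
    rw [← Finset.prod_filter_mul_prod_filter_not Finset.univ (fun i => y i ≠ 0)]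
    have h1 : ∏ i ∈ Finset.univ.filter (fun i => y i ≠ 0), g (y i)
        = Real.exp (-lam) ^ hammingNorm y := by
      rw [Finset.prod_congr rfl (fun i hi => ?_), Finset.prod_const]
      · rfl
      · simp only [Finset.mem_filter] at hi
        simp [hg, hi.2]
    have h2 : ∏ i ∈ Finset.univ.filter (fun i => ¬ y i ≠ 0), g (y i)
        = Real.exp lam ^ (n - hammingNorm y) := by
      rw [Finset.prod_congr rfl (fun i hi => ?_), Finset.prod_const]
      · congr 1
        have h3 := Finset.card_filter_add_card_filter_not
          (s := Finset.univ) (p := fun i : Fin n => y i ≠ 0)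
        simp only [Finset.card_univ, Fintype.card_fin] at h3
        have h4 : hammingNorm y = (Finset.univ.filter (fun i => y i ≠ 0)).card := rfl
        omega
      · simp only [Finset.mem_filter, not_not] at hi
        simp [hg, hi.2]
    rw [h1, h2, ← Real.exp_nat_mul, ← Real.exp_nat_mul, ← Real.exp_add, hF]
    congr 1
    have : ((n - hammingNorm y : ℕ) : ℝ) = (n:ℝ) - hammingNorm y := by
      push_cast [hwle]; ring
    rw [this]; ring
  -- sum formula
  have hgsum : ∑ a : ZMod 2, g a = Real.exp lam + Real.exp (-lam) := by
    have h : (Finset.univ : Finset (ZMod 2)) = {0, 1} := by decide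
    rw [h, Finset.sum_insert (by decide), Finset.sum_singleton]
    simp [hg]
  have hsum : ∑ y : Fin n → ZMod 2, F y = (Real.exp lam + Real.exp (-lam)) ^ n := by
    rw [← Finset.sum_congr rfl (fun y _ => hprod y), ← Fintype.prod_sum (fun _ a => g a)]
    rw [Finset.prod_congr rfl (fun i _ => hgsum), Finset.prod_const]
    simp
  -- lower bound on sum from bad vectors
  have hbad_lb : (Bad.card : ℝ) * Real.exp (lam * (2 * B)) ≤ ∑ y : Fin n → ZMod 2, F y := by
    have h1 : (Bad.card : ℝ) * Real.exp (lam * (2 * B)) = ∑ _y ∈ Bad, Real.exp (lam * (2 * B)) := by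
      rw [Finset.sum_const, nsmul_eq_mul]
    rw [h1]
    apply le_trans (Finset.sum_le_sum (fun y hy => ?_))
      (Finset.sum_le_sum_of_subset_of_nonneg (Finset.subset_univ Bad)
        (fun y _ _ => (Real.exp_pos _).le))
    · rw [hBadDef, Finset.mem_filter] at hy
      apply Real.exp_le_exp.2
      apply mul_le_mul_of_nonneg_left _ hlampos.le
      have := hy.2
      linarith
  -- upper bound
  have hub : (Real.exp lam + Real.exp (-lam)) ^ n ≤ 2 ^ n * Real.exp (↑n * (lam ^ 2 / 2)) := by
    have hcosh : Real.exp lam + Real.exp (-lam) = 2 * Real.cosh lam := by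
      rw [Real.cosh_eq]; ring
    rw [hcosh]
    calc (2 * Real.cosh lam) ^ n ≤ (2 * Real.exp (lam ^ 2 / 2)) ^ n := by
          apply pow_le_pow_left₀ (by positivity)
          have := Real.cosh_le_exp_half_sq lam
          linarith
      _ = 2 ^ n * Real.exp (↑n * (lam ^ 2 / 2)) := by
          rw [mul_pow, ← Real.exp_nat_mul]
  -- combine
  have key : (n:ℝ) * (lam ^ 2 / 2) - lam * (2 * B) = -(k * Real.log 2) := by
    have h1 : (n:ℝ) * (lam ^ 2 / 2) - lam * (2 * B) = -(2 * B ^ 2 / n) := by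
      rw [hlam]; field_simp; ring
    rw [h1, hB2, hBq]; field_simp
  have hexp : Real.exp ((n:ℝ) * (lam ^ 2 / 2)) / Real.exp (lam * (2 * B)) = ((2:ℝ) ^ k)⁻¹ := by
    rw [← Real.exp_sub, key, Real.exp_neg]
    congr 1
    rw [Real.exp_nat_mul, Real.exp_log (by norm_num)]
  rcases Bad.eq_empty_or_nonempty with hE | hNE
  · rw [hE]
    simp only [Finset.card_empty, Nat.cast_zero, zero_mul]
    positivity
  · -- strict inequality in the bad sum
    have hstrict : (Bad.card : ℝ) * Real.exp (lam * (2 * B)) < ∑ y : Fin n → ZMod 2, F y := by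
      have h1 : (Bad.card : ℝ) * Real.exp (lam * (2 * B)) = ∑ _y ∈ Bad, Real.exp (lam * (2 * B)) := by
        rw [Finset.sum_const, nsmul_eq_mul]
      rw [h1]
      apply lt_of_lt_of_le (Finset.sum_lt_sum_of_nonempty hNE (fun y hy => ?_))
        (Finset.sum_le_sum_of_subset_of_nonneg (Finset.subset_univ Bad)
          (fun y _ _ => (Real.exp_pos _).le))
      rw [hBadDef, Finset.mem_filter] at hy
      apply Real.exp_lt_exp.2
      apply mul_lt_mul_of_pos_left _ hlampos
      have := hy.2
      linarith
    have : (Bad.card : ℝ) * Real.exp (lam * (2 * B)) < 2 ^ n * Real.exp (↑n * (lam ^ 2 / 2)) :=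
      lt_of_lt_of_le hstrict (hsum ▸ hub)
    have hepos := Real.exp_pos (lam * (2 * B))
    have h2 : (Bad.card : ℝ) < 2 ^ n * (((2:ℝ) ^ k)⁻¹) := by
      rw [← hexp, ← mul_div_assoc]
      exact (lt_div_iff₀ hepos).2 this
    have h2k : (0:ℝ) < 2 ^ k := by positivity
    calc (Bad.card : ℝ) * 2 ^ k < 2 ^ n * (((2:ℝ) ^ k)⁻¹) * 2 ^ k := by
          exact mul_lt_mul_of_pos_right h2 h2k
      _ = 2 ^ n := by field_simp

open Finset Real in
/-- A `k`-dimensional linear code `C ⊆ 𝔽₂ⁿ` with `0 < k ≤ n` has an unweighted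
one-sided `1/2`-sparsifier of size at most `n/2 + √((ln 2)/2 · n k)`. -/
theorem small_half_sparsifier (n k : ℕ) (C : Submodule (ZMod 2) (Fin n → ZMod 2))
    (hk : Module.finrank (ZMod 2) C = k) (hk0 : 0 < k) (hkn : k ≤ n) :
    ∃ S : Finset (Fin n), IsSparsifier C (1 / 2) S ∧
      (S.card : ℝ) ≤ (n : ℝ) / 2 + Real.sqrt (Real.log 2 / 2 * ((n : ℝ) * k)) := by
  classical
  set B : ℝ := Real.sqrt (Real.log 2 / 2 * ((n:ℝ) * k)) with hBdef
  set Bad : Finset (Fin n → ZMod 2) :=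
    Finset.univ.filter (fun y => (hammingNorm y : ℝ) < n / 2 - B) with hBadDef
  have hcount : (Bad.card : ℝ) * 2 ^ k < 2 ^ n := by
    have := bad_count n k hk0 hkn
    push_cast at this ⊢
    exact this
  set CF : Finset (Fin n → ZMod 2) := Finset.univ.filter (fun v => v ∈ C) with hCFdef
  have hCFmem : ∀ v, v ∈ CF ↔ v ∈ C := by
    intro v; simp [hCFdef]
  have hCFcard : CF.card = 2 ^ k := by
    have h1 : CF.card = Fintype.card {v : Fin n → ZMod 2 // v ∈ C} := by
      rw [hCFdef]
      exact (Fintype.card_subtype (p := fun v => v ∈ C)).symm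
    have h2 : Fintype.card {v : Fin n → ZMod 2 // v ∈ C} = Fintype.card C :=
      Fintype.card_congr (Equiv.refl _)
    have h3 : Fintype.card C = Fintype.card (ZMod 2) ^ Module.finrank (ZMod 2) C :=
      Module.card_eq_pow_finrank (K := ZMod 2) (V := C)
    rw [h1, h2, h3, hk, ZMod.card]
  -- exists a coset entirely outside Bad
  have hexists : ∃ y₀ : Fin n → ZMod 2, ∀ c ∈ C, y₀ + c ∉ Bad := by
    by_contra hcon
    push_neg at hcon
    have hcover : (Finset.univ : Finset (Fin n → ZMod 2))
        ⊆ CF.biUnion (fun c => Bad.image (· + c)) := by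
      intro y _
      obtain ⟨c, hcC, hbad⟩ := hcon y
      rw [Finset.mem_biUnion]
      refine ⟨c, (hCFmem c).2 hcC, Finset.mem_image.2 ⟨y + c, hbad, ?_⟩⟩
      rw [add_assoc]
      have : c + c = 0 := by ext i; exact CharTwo.add_self_eq_zero _
      rw [this, add_zero]
    have hcard : (2:ℕ) ^ n ≤ 2 ^ k * Bad.card := by
      have h1 : (Finset.univ : Finset (Fin n → ZMod 2)).card = 2 ^ n := by
        simp [Finset.card_univ]
      calc (2:ℕ) ^ n = (Finset.univ : Finset (Fin n → ZMod 2)).card := h1.symm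
        _ ≤ (CF.biUnion (fun c => Bad.image (· + c))).card := Finset.card_le_card hcover
        _ ≤ ∑ c ∈ CF, (Bad.image (· + c)).card := Finset.card_biUnion_le
        _ ≤ ∑ _c ∈ CF, Bad.card := Finset.sum_le_sum (fun c _ => Finset.card_image_le)
        _ = 2 ^ k * Bad.card := by rw [Finset.sum_const, smul_eq_mul, hCFcard]
    have : ((2:ℝ)) ^ n ≤ 2 ^ k * Bad.card := by exact_mod_cast hcard
    linarith
  obtain ⟨y₀, hy₀⟩ := hexists
  -- pick minimum-weight element of the coset
  set T : Finset (Fin n → ZMod 2) := CF.image (fun c => y₀ + c) with hTdef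
  have hTne : T.Nonempty := ⟨y₀ + 0, Finset.mem_image.2 ⟨0, (hCFmem 0).2 C.zero_mem, rfl⟩⟩
  obtain ⟨y', hy'T, hmin⟩ := Finset.exists_min_image T hammingNorm hTne
  obtain ⟨c₀, hc₀CF, hy'eq⟩ := Finset.mem_image.1 hy'T
  have hc₀C : c₀ ∈ C := (hCFmem c₀).1 hc₀CF
  -- y' is not bad
  have hy'good : ¬ ((hammingNorm y' : ℝ) < n / 2 - B) := by
    have := hy₀ c₀ hc₀C
    rw [hy'eq] at this
    rw [hBadDef, Finset.mem_filter] at this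
    push_neg at this
    exact fun h => absurd (this (Finset.mem_univ _)) (not_le.2 h)
  -- min-weight property over the coset
  have hminC : ∀ c ∈ C, hammingNorm y' ≤ hammingNorm (y' + c) := by
    intro c hc
    apply hmin
    rw [hTdef, Finset.mem_image]
    refine ⟨c₀ + c, (hCFmem _).2 (C.add_mem hc₀C hc), ?_⟩
    rw [← hy'eq, add_assoc]
  set S : Finset (Fin n) := Finset.univ.filter (fun i => y' i = 0) with hSdef
  refine ⟨S, ?_, ?_⟩
  · -- sparsifier property
    intro c hc
    set A : Finset (Fin n) := Finset.univ.filter (fun i => c i ≠ 0 ∧ y' i ≠ 0) with hA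
    set Bb : Finset (Fin n) := Finset.univ.filter (fun i => c i ≠ 0 ∧ y' i = 0) with hBb
    set D : Finset (Fin n) := Finset.univ.filter (fun i => c i = 0 ∧ y' i ≠ 0) with hD
    have hcsplit : hammingNorm c = A.card + Bb.card := by
      have h1 := Finset.card_filter_add_card_filter_not
        (s := Finset.univ.filter (fun i : Fin n => c i ≠ 0)) (p := fun i => y' i ≠ 0)
      rw [Finset.filter_filter, Finset.filter_filter] at h1
      have hA' : A = Finset.univ.filter (fun i => c i ≠ 0 ∧ y' i ≠ 0) := rfl
      have h2 : (Finset.univ.filter (fun i : Fin n => c i ≠ 0 ∧ ¬ y' i ≠ 0)) = Bb := by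
        rw [hBb]; apply Finset.filter_congr; intro i _; simp [not_not]
      rw [h2] at h1
      have hrfl : hammingNorm c = (Finset.univ.filter (fun i => c i ≠ 0)).card := rfl
      rw [hrfl, ← h1]
    have hy'split : hammingNorm y' = A.card + D.card := by
      have h1 := Finset.card_filter_add_card_filter_not
        (s := Finset.univ.filter (fun i : Fin n => y' i ≠ 0)) (p := fun i => c i ≠ 0)
      rw [Finset.filter_filter, Finset.filter_filter] at h1
      have h2 : (Finset.univ.filter (fun i : Fin n => y' i ≠ 0 ∧ c i ≠ 0)) = A := by
        rw [hA]; apply Finset.filter_congr; intro i _; simp [and_comm]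
      have h3 : (Finset.univ.filter (fun i : Fin n => y' i ≠ 0 ∧ ¬ c i ≠ 0)) = D := by
        rw [hD]; apply Finset.filter_congr; intro i _; simp [not_not, and_comm]
      rw [h2, h3] at h1
      have hrfl : hammingNorm y' = (Finset.univ.filter (fun i => y' i ≠ 0)).card := rfl
      rw [hrfl, ← h1]
    have hsum_split : hammingNorm (y' + c) = Bb.card + D.card := by
      have hiff : ∀ a b : ZMod 2, (a + b ≠ 0) ↔ ((b ≠ 0 ∧ a = 0) ∨ (b = 0 ∧ a ≠ 0)) := by decide
      have h1 : (Finset.univ.filter (fun i => (y' + c) i ≠ 0))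
          = Bb ∪ D := by
        rw [hBb, hD, ← Finset.filter_or]
        apply Finset.filter_congr
        intro i _
        rw [Pi.add_apply]
        exact hiff (y' i) (c i)
      have hdisj : Disjoint Bb D := by
        rw [Finset.disjoint_left]
        intro i hi1 hi2
        rw [hBb, Finset.mem_filter] at hi1
        rw [hD, Finset.mem_filter] at hi2
        exact hi1.2.1 hi2.2.1
      have : hammingNorm (y' + c) = (Bb ∪ D).card := by
        rw [← h1]; rfl
      rw [this, Finset.card_union_of_disjoint hdisj]
    have hwtOn : wtOn S c = Bb.card := by
      rw [wtOn, hSdef, Finset.filter_filter, hBb]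
      congr 1
      apply Finset.filter_congr
      intro i _
      simp [and_comm]
    have hineq := hminC c hc
    rw [hy'split, hsum_split] at hineq
    have hAB : A.card ≤ Bb.card := by omega
    rw [hwtOn]
    have : hammingNorm c ≤ 2 * Bb.card := by omega
    have hcast : (hammingNorm c : ℝ) ≤ 2 * (Bb.card : ℝ) := by exact_mod_cast this
    linarith
  · -- size bound
    have hS : S.card + hammingNorm y' = n := by
      have h1 := Finset.card_filter_add_card_filter_not
        (s := (Finset.univ : Finset (Fin n))) (p := fun i => y' i = 0)
      simp only [Finset.card_univ, Fintype.card_fin] at h1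
      have h2 : (Finset.univ.filter (fun i : Fin n => ¬ y' i = 0)).card = hammingNorm y' := rfl
      rw [hSdef]
      omega
    have h3 : (n:ℝ) / 2 - B ≤ (hammingNorm y' : ℝ) := le_of_not_gt hy'good
    have h4 : (S.card : ℝ) = (n:ℝ) - (hammingNorm y' : ℝ) := by
      have : (S.card : ℝ) + (hammingNorm y' : ℝ) = n := by exact_mod_cast hS
      linarith
    rw [h4]
    linarith
end

section
/- Let C ⊆ F_2^n be a linear code of dimension k with 0 < k ≤ n, let ℓ be a positive integer, and let α = 1 − 1/2^ℓ. Then C has an unweighted one-sided α-sparsifier S ⊆ [n] with |S| ≤ α·n + c·sqrt(n·k), where c = sqrt(ln 2)·(1 + sqrt 2). -/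
set_option maxHeartbeats 1000000


open Finset Real

namespace Sparsify

variable {n : ℕ}

noncomputable def sg (a : ZMod 2) : ℝ := if a = 0 then 1 else -1

noncomputable def bsg (b : Bool) : ℝ := if b then 1 else -1

lemma sg_add (a b : ZMod 2) : sg (a + b) = sg a * sg b := by
  have h : ∀ x : ZMod 2, x = 0 ∨ x = 1 := by decide
  have h11 : (1 + 1 : ZMod 2) = 0 := by decide
  rcases h a with ha | ha <;> rcases h b with hb | hb <;>
    subst ha <;> subst hb <;> simp [sg, h11] <;> norm_num

lemma sg_sq (a : ZMod 2) : sg a * sg a = 1 := by unfold sg; split <;> norm_num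

noncomputable def Xf (V : Finset (Fin n)) (c : Fin n → ZMod 2) (σ : Fin n → Bool) : ℝ :=
  ∑ i ∈ V, sg (c i) * bsg (σ i)

def Xz (V : Finset (Fin n)) (c : Fin n → ZMod 2) (σ : Fin n → Bool) : ℤ :=
  ∑ i ∈ V, (if c i = 0 then 1 else -1) * (if σ i then 1 else -1)

lemma Xf_eq (V : Finset (Fin n)) (c : Fin n → ZMod 2) (σ : Fin n → Bool) :
    Xf V c σ = (Xz V c σ : ℝ) := by
  unfold Xf Xz sg bsg
  push_cast
  exact Finset.sum_congr rfl fun i _ => by split_ifs <;> norm_num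

lemma sum_exp_le (V : Finset (Fin n)) (c : Fin n → ZMod 2) (l : ℝ) :
    ∑ σ : Fin n → Bool, Real.exp (l * Xf V c σ)
      ≤ (2:ℝ) ^ n * Real.exp (l ^ 2 / 2) ^ V.card := by
  classical
  have h1 : ∀ σ : Fin n → Bool, Real.exp (l * Xf V c σ)
      = ∏ i : Fin n, (if i ∈ V then Real.exp (l * (sg (c i) * bsg (σ i))) else 1) := by
    intro σ
    rw [Fintype.prod_ite_mem]
    rw [Xf, Finset.mul_sum, Real.exp_sum]
  calc ∑ σ : Fin n → Bool, Real.exp (l * Xf V c σ)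
      = ∑ σ : Fin n → Bool, ∏ i : Fin n,
          (if i ∈ V then Real.exp (l * (sg (c i) * bsg (σ i))) else 1) := by
        exact Finset.sum_congr rfl fun σ _ => h1 σ
    _ = ∏ i : Fin n, ∑ b : Bool, (if i ∈ V then Real.exp (l * (sg (c i) * bsg b)) else 1) :=
        (Fintype.prod_sum (fun i b => if i ∈ V then Real.exp (l * (sg (c i) * bsg b)) else 1)).symm
    _ ≤ ∏ i : Fin n, (2 * if i ∈ V then Real.exp (l ^ 2 / 2) else 1) := by
        apply Finset.prod_le_prod
        · intro i _; positivity
        · intro i _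
          by_cases hi : i ∈ V
          · simp only [hi, if_true]
            have hnorm : ∀ b : Bool, l * (sg (c i) * bsg b) = (l * sg (c i)) * bsg b := by
              intro b; ring
            rw [Fintype.sum_bool]
            have e1 : bsg true = 1 := by simp [bsg]
            have e2 : bsg false = -1 := by simp [bsg]
            rw [e1, e2]
            have : Real.exp (l * (sg (c i) * 1)) + Real.exp (l * (sg (c i) * -1))
                = 2 * Real.cosh (l * sg (c i)) := by
              rw [Real.cosh_eq]; ring_nf
            rw [this]
            have hc : Real.cosh (l * sg (c i)) ≤ Real.exp ((l * sg (c i)) ^ 2 / 2) :=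
              Real.cosh_le_exp_half_sq _
            have hsq : (l * sg (c i)) ^ 2 = l ^ 2 := by
              have := sg_sq (c i); nlinarith [this]
            rw [hsq] at hc
            linarith
          · simp [hi]
    _ = (2:ℝ) ^ n * Real.exp (l ^ 2 / 2) ^ V.card := by
        rw [Finset.prod_mul_distrib, Finset.prod_const, Fintype.prod_ite_mem, Finset.prod_const]
        simp [Finset.card_univ]

end Sparsify

namespace Sparsify

variable {n : ℕ}

lemma tail_count (V : Finset (Fin n)) (hm : 0 < V.card) (c : Fin n → ZMod 2) (u : ℝ)
    (hu : 0 ≤ u) :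
    (((Finset.univ : Finset (Fin n → Bool)).filter fun σ => u ≤ Xf V c σ).card : ℝ)
      ≤ (2:ℝ) ^ n * Real.exp (-(u ^ 2) / (2 * V.card)) := by
  have hm' : (0:ℝ) < (V.card : ℝ) := by exact_mod_cast hm
  set l : ℝ := u / V.card with hl
  have hl0 : 0 ≤ l := div_nonneg hu hm'.le
  set F := (Finset.univ : Finset (Fin n → Bool)).filter fun σ => u ≤ Xf V c σ with hF
  have key : (F.card : ℝ) * Real.exp (l * u) ≤ (2:ℝ) ^ n * Real.exp (l ^ 2 / 2) ^ V.card := by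
    calc (F.card : ℝ) * Real.exp (l * u) = ∑ _σ ∈ F, Real.exp (l * u) := by
          rw [Finset.sum_const, nsmul_eq_mul]
      _ ≤ ∑ σ ∈ F, Real.exp (l * Xf V c σ) := by
          refine Finset.sum_le_sum fun σ hσ => ?_
          have hXσ := (Finset.mem_filter.1 hσ).2
          exact Real.exp_le_exp.2 (mul_le_mul_of_nonneg_left hXσ hl0)
      _ ≤ ∑ σ : Fin n → Bool, Real.exp (l * Xf V c σ) :=
          Finset.sum_le_sum_of_subset_of_nonneg (Finset.subset_univ F)
            (fun σ _ _ => (Real.exp_pos _).le)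
      _ ≤ (2:ℝ) ^ n * Real.exp (l ^ 2 / 2) ^ V.card := sum_exp_le V c l
  have hexp : Real.exp (l ^ 2 / 2) ^ V.card = Real.exp (l ^ 2 / 2 * V.card) := by
    rw [← Real.exp_nat_mul]; ring_nf
  rw [hexp] at key
  have hpos : (0:ℝ) < Real.exp (l * u) := Real.exp_pos _
  have := (le_div_iff₀ hpos).2 key
  calc (F.card : ℝ) ≤ (2:ℝ) ^ n * Real.exp (l ^ 2 / 2 * V.card) / Real.exp (l * u) := this
    _ = (2:ℝ) ^ n * Real.exp (l ^ 2 / 2 * V.card - l * u) := by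
        rw [mul_div_assoc, Real.exp_sub]
    _ = (2:ℝ) ^ n * Real.exp (-(u ^ 2) / (2 * V.card)) := by
        congr 1
        congr 1
        rw [hl]
        field_simp
        ring
  
open Classical in
noncomputable def CF (C : Submodule (ZMod 2) (Fin n → ZMod 2)) : Finset (Fin n → ZMod 2) :=
  Finset.univ.filter (· ∈ C)

lemma mem_CF {C : Submodule (ZMod 2) (Fin n → ZMod 2)} {x : Fin n → ZMod 2} :
    x ∈ CF C ↔ x ∈ C := by
  classical
  simp [CF]

lemma card_CF {k : ℕ} (C : Submodule (ZMod 2) (Fin n → ZMod 2))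
    (hk : Module.finrank (ZMod 2) C = k) : (CF C).card = 2 ^ k := by
  classical
  have h1 : (CF C).card = Fintype.card {x : Fin n → ZMod 2 // x ∈ C} :=
    (Fintype.card_subtype _).symm
  rw [h1]
  have h2 : Fintype.card {x : Fin n → ZMod 2 // x ∈ C}
      = Fintype.card (ZMod 2) ^ Module.finrank (ZMod 2) C := by
    exact Module.card_eq_pow_finrank
  rw [h2, hk, ZMod.card]

lemma exists_good {k : ℕ} (C : Submodule (ZMod 2) (Fin n → ZMod 2))
    (hCcard : (CF C).card = 2 ^ k) (V : Finset (Fin n)) (hm : 0 < V.card) :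
    ∃ σ : Fin n → Bool, ∀ c ∈ CF C,
      Xf V c σ ≤ Real.sqrt (2 * Real.log 2 * V.card * k) := by
  classical
  set T := Real.sqrt (2 * Real.log 2 * V.card * k) with hT
  have hT0 : 0 ≤ T := Real.sqrt_nonneg _
  set u : ℝ := ((⌊T⌋ : ℤ) : ℝ) + 1 with hu
  have hTu : T < u := by
    rw [hu]
    exact_mod_cast Int.lt_floor_add_one T
  have hu0 : 0 ≤ u := le_trans hT0 hTu.le
  have hfilter : ∀ c : Fin n → ZMod 2,
      ((Finset.univ : Finset (Fin n → Bool)).filter fun σ => T < Xf V c σ)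
        = (Finset.univ.filter fun σ => u ≤ Xf V c σ) := by
    intro c
    refine Finset.filter_congr fun σ _ => ?_
    rw [Xf_eq]
    constructor
    · intro h
      have h2 : (⌊T⌋ : ℤ) < Xz V c σ := Int.floor_lt.2 h
      have h3 : (⌊T⌋ : ℤ) + 1 ≤ Xz V c σ := h2
      rw [hu]
      exact_mod_cast h3
    · intro h
      exact lt_of_lt_of_le hTu h
  have hcount : ∀ c ∈ CF C,
      (((Finset.univ : Finset (Fin n → Bool)).filter fun σ => T < Xf V c σ).card : ℝ)
        < (2:ℝ) ^ n * ((2:ℝ) ^ k)⁻¹ := by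
    intro c _
    rw [hfilter c]
    refine lt_of_le_of_lt (tail_count V hm c u hu0) ?_
    have hmono : Real.exp (-(u ^ 2) / (2 * V.card)) < Real.exp (-(T ^ 2) / (2 * V.card)) := by
      apply Real.exp_lt_exp.2
      have h1 : T ^ 2 < u ^ 2 := by nlinarith
      have h2 : (0:ℝ) < 2 * V.card := by
        have : (0:ℝ) < (V.card : ℝ) := by exact_mod_cast hm
        linarith
      have h3 : -(u ^ 2) < -(T ^ 2) := by linarith
      gcongr
    have hTsq : T ^ 2 = 2 * Real.log 2 * V.card * k := Real.sq_sqrt (by positivity)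
    have hVpos : (0:ℝ) < (V.card : ℝ) := by exact_mod_cast hm
    have harg : -(T ^ 2) / (2 * (V.card : ℝ)) = -((k : ℝ) * Real.log 2) := by
      rw [hTsq]; field_simp
    have hval : Real.exp (-(T ^ 2) / (2 * (V.card : ℝ))) = ((2:ℝ) ^ k)⁻¹ := by
      rw [harg, Real.exp_neg, Real.exp_nat_mul, Real.exp_log (by norm_num : (0:ℝ) < 2)]
    calc (2:ℝ) ^ n * Real.exp (-(u ^ 2) / (2 * V.card))
        < (2:ℝ) ^ n * Real.exp (-(T ^ 2) / (2 * V.card)) := by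
          exact mul_lt_mul_of_pos_left hmono (by positivity)
      _ = (2:ℝ) ^ n * ((2:ℝ) ^ k)⁻¹ := by rw [hval]
  set B := (CF C).biUnion (fun c => Finset.univ.filter fun σ => T < Xf V c σ) with hB
  have hCFne : (CF C).Nonempty := ⟨0, mem_CF.2 C.zero_mem⟩
  have hBlt : (B.card : ℝ) < (2:ℝ) ^ n := by
    have h1 : (B.card : ℝ) ≤
        ∑ c ∈ CF C, (((Finset.univ : Finset (Fin n → Bool)).filter
          fun σ => T < Xf V c σ).card : ℝ) := by
      rw [← Nat.cast_sum]
      exact_mod_cast Finset.card_biUnion_le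
    have h2 : ∑ c ∈ CF C, (((Finset.univ : Finset (Fin n → Bool)).filter
          fun σ => T < Xf V c σ).card : ℝ)
        < ∑ _c ∈ CF C, (2:ℝ) ^ n * ((2:ℝ) ^ k)⁻¹ :=
      Finset.sum_lt_sum_of_nonempty hCFne hcount
    have h3 : ∑ _c ∈ CF C, (2:ℝ) ^ n * ((2:ℝ) ^ k)⁻¹ = (2:ℝ) ^ n := by
      rw [Finset.sum_const, hCcard, nsmul_eq_mul]
      push_cast
      field_simp
    linarith
  obtain ⟨σ, hσ⟩ : ∃ σ, σ ∉ B := by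
    by_contra h
    push_neg at h
    have hBuniv : B = Finset.univ := Finset.eq_univ_iff_forall.2 h
    rw [hBuniv, Finset.card_univ] at hBlt
    have : Fintype.card (Fin n → Bool) = 2 ^ n := by simp [Fintype.card_fun]
    rw [this] at hBlt
    push_cast at hBlt
    exact lt_irrefl _ hBlt
  refine ⟨σ, fun c hc => ?_⟩
  by_contra hlt
  push_neg at hlt
  exact hσ (Finset.mem_biUnion.2 ⟨c, hc, Finset.mem_filter.2 ⟨Finset.mem_univ _, hlt⟩⟩)

end Sparsify

namespace Sparsify

variable {n : ℕ}

lemma sum_bsg (τ : Fin n → Bool) (s : Finset (Fin n)) :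
    ∑ i ∈ s, bsg (τ i) = 2 * ((s.filter fun i => τ i = true).card : ℝ) - (s.card : ℝ) := by
  classical
  have h : ∀ i ∈ s, bsg (τ i) = (if τ i = true then (1:ℝ) else -1) := by
    intro i _; simp [bsg]
  rw [Finset.sum_congr rfl h, Finset.sum_ite, Finset.sum_const, Finset.sum_const]
  have hcard := Finset.card_filter_add_card_filter_not
    (s := s) (p := fun i => τ i = true)
  simp only [nsmul_eq_mul, mul_one, mul_neg]
  have : ((s.filter fun i => ¬ (τ i = true)).card : ℝ)
      = (s.card : ℝ) - ((s.filter fun i => τ i = true).card : ℝ) := by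
    have := hcard
    push_cast [← this]
    ring
  rw [this]
  ring

lemma half_step {k : ℕ} (C : Submodule (ZMod 2) (Fin n → ZMod 2))
    (hk0 : 0 < k) (hCcard : (CF C).card = 2 ^ k) (V : Finset (Fin n)) :
    ∃ W : Finset (Fin n), W ⊆ V ∧ (∀ c ∈ C, 2 * wtOn W c ≤ wtOn V c) ∧
      2 * W.card ≤ V.card ∧
      ((V.card : ℝ) - Real.sqrt (2 * Real.log 2 * V.card * k)) / 2 ≤ (W.card : ℝ) := by
  classical
  rcases Nat.eq_zero_or_pos V.card with hm | hm
  · refine ⟨∅, Finset.empty_subset _, fun c _ => by simp [wtOn], by simp, ?_⟩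
    rw [hm]
    simp only [Nat.cast_zero, Finset.card_empty]
    have := Real.sqrt_nonneg (2 * Real.log 2 * (0:ℝ) * k)
    push_cast
    linarith
  · obtain ⟨σ, hσ⟩ := exists_good C hCcard V hm
    set T := Real.sqrt (2 * Real.log 2 * V.card * k) with hTdef
    obtain ⟨cm, hcmCF, hcmmax⟩ :=
      Finset.exists_max_image (CF C) (fun c => Xf V c σ) ⟨0, mem_CF.2 C.zero_mem⟩
    set τ : Fin n → Bool := fun i => if cm i = 0 then σ i else !(σ i) with hτ
    have hbsgτ : ∀ i, bsg (τ i) = sg (cm i) * bsg (σ i) := by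
      intro i
      by_cases h : cm i = 0
      · simp [hτ, h, sg]
      · cases hσi : σ i <;> simp [hτ, h, hσi, sg, bsg]
    have keyX : ∀ c : Fin n → ZMod 2, Xf V c τ = Xf V (c + cm) σ := by
      intro c
      unfold Xf
      refine Finset.sum_congr rfl fun i _ => ?_
      rw [hbsgτ i]
      have h1 : (c + cm) i = c i + cm i := rfl
      rw [h1, sg_add]
      ring
    have hmax : ∀ c ∈ CF C, Xf V c τ ≤ Xf V 0 τ := by
      intro c hc
      rw [keyX c, keyX 0, zero_add]
      exact hcmmax _ (mem_CF.2 (C.add_mem (mem_CF.1 hc) (mem_CF.1 hcmCF)))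
    set U := V.filter (fun i => τ i = true) with hU
    have hUsub : U ⊆ V := Finset.filter_subset _ _
    have hX0 : Xf V 0 τ = 2 * (U.card : ℝ) - (V.card : ℝ) := by
      unfold Xf
      have h : ∀ i ∈ V, sg ((0 : Fin n → ZMod 2) i) * bsg (τ i) = bsg (τ i) := by
        intro i _
        have : sg (0 : ZMod 2) = 1 := by simp [sg]
        show sg (0 : ZMod 2) * bsg (τ i) = bsg (τ i)
        rw [this, one_mul]
      rw [Finset.sum_congr rfl h, sum_bsg]
    have hX0T : Xf V 0 τ ≤ T := by
      rw [keyX 0, zero_add]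
      exact hσ cm hcmCF
    have hUcard : 2 * (U.card : ℝ) ≤ (V.card : ℝ) + T := by
      rw [hX0] at hX0T; linarith
    -- weight inequality for each codeword
    have hwt : ∀ c ∈ C, wtOn V c ≤ 2 * wtOn U c := by
      intro c hc
      have hXc := hmax c (mem_CF.2 hc)
      have hdiff : Xf V 0 τ - Xf V c τ
          = ∑ i ∈ V, (1 - sg (c i)) * bsg (τ i) := by
        unfold Xf
        rw [← Finset.sum_sub_distrib]
        refine Finset.sum_congr rfl fun i _ => ?_
        have : sg ((0 : Fin n → ZMod 2) i) = 1 := by simp [sg]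
        rw [this]
        ring
      have hdiff2 : ∑ i ∈ V, (1 - sg (c i)) * bsg (τ i)
          = ∑ i ∈ V.filter (fun i => c i ≠ 0), 2 * bsg (τ i) := by
        rw [Finset.sum_filter]
        refine Finset.sum_congr rfl fun i _ => ?_
        by_cases h : c i = 0 <;> simp [h, sg] <;> norm_num
      set A := V.filter (fun i => c i ≠ 0) with hA
      have hdiff3 : ∑ i ∈ A, 2 * bsg (τ i)
          = 2 * (2 * ((A.filter fun i => τ i = true).card : ℝ) - (A.card : ℝ)) := by
        rw [← Finset.mul_sum, sum_bsg]
      have hAU : A.filter (fun i => τ i = true) = U.filter (fun i => c i ≠ 0) := by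
        rw [hA, hU, Finset.filter_comm]
      have hineq : 0 ≤ Xf V 0 τ - Xf V c τ := by linarith
      rw [hdiff, hdiff2, hdiff3, hAU] at hineq
      have : (A.card : ℝ) ≤ 2 * ((U.filter fun i => c i ≠ 0).card : ℝ) := by linarith
      have hfin : (wtOn V c : ℝ) ≤ 2 * (wtOn U c : ℝ) := by
        unfold wtOn
        exact_mod_cast this
      exact_mod_cast hfin
    -- enlarge U
    set tgt := max U.card ((V.card + 1) / 2) with htgt
    have htgtV : tgt ≤ V.card := by
      apply max_le (Finset.card_le_card hUsub)
      omega
    obtain ⟨U', hUU', hU'V, hU'card⟩ :=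
      Finset.exists_subsuperset_card_eq hUsub (le_max_left _ _) htgtV
    refine ⟨V \ U', Finset.sdiff_subset, ?_, ?_, ?_⟩
    · intro c hc
      have h1 := hwt c hc
      have h2 : wtOn U c ≤ wtOn U' c :=
        Finset.card_le_card (Finset.filter_subset_filter _ hUU')
      have h3 : wtOn U' c + wtOn (V \ U') c = wtOn V c := by
        unfold wtOn
        rw [← Finset.card_union_of_disjoint
          (Finset.disjoint_filter_filter Finset.disjoint_sdiff),
          ← Finset.filter_union, Finset.union_sdiff_of_subset hU'V]
      omega
    · have h4 : (V \ U').card = V.card - U'.card := Finset.card_sdiff_of_subset hU'V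
      omega
    · have h4 : (V \ U').card = V.card - U'.card := Finset.card_sdiff_of_subset hU'V
      have hT1 : (1:ℝ) ≤ T := by
        have hlog := Real.log_two_gt_d9
        have hm1 : (1:ℝ) ≤ (V.card : ℝ) := by exact_mod_cast hm
        have hk1 : (1:ℝ) ≤ (k : ℝ) := by exact_mod_cast hk0
        rw [hTdef, show (1:ℝ) = Real.sqrt 1 from Real.sqrt_one.symm]
        apply Real.sqrt_le_sqrt
        have h1 : (1:ℝ) ≤ 2 * Real.log 2 := by linarith
        have h2 : (1:ℝ) ≤ 2 * Real.log 2 * (V.card : ℝ) := by nlinarith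
        nlinarith
      have htgtle : (tgt : ℝ) ≤ ((V.card : ℝ) + T) / 2 := by
        rcases max_cases U.card ((V.card + 1) / 2) with ⟨heq, _⟩ | ⟨heq, _⟩ <;>
          rw [htgt, heq]
        · linarith
        · have hle : (((V.card + 1) / 2 : ℕ) : ℝ) ≤ ((V.card : ℝ) + 1) / 2 := by
            have := Nat.cast_div_le (α := ℝ) (m := V.card + 1) (n := 2)
            push_cast at this ⊢
            linarith
          linarith
      have hcast : ((V \ U').card : ℝ) = (V.card : ℝ) - (U'.card : ℝ) := by
        rw [h4]
        have : U'.card ≤ V.card := Finset.card_le_card hU'V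
        push_cast [this]
        ring
      rw [hcast, hU'card]
      linarith

end Sparsify

namespace Sparsify

variable {n : ℕ}

lemma iterate {k : ℕ} (C : Submodule (ZMod 2) (Fin n → ZMod 2))
    (hk0 : 0 < k) (hCcard : (CF C).card = 2 ^ k) (j : ℕ) :
    ∃ V : Finset (Fin n), (∀ c ∈ C, 2 ^ j * wtOn V c ≤ hammingNorm c) ∧
      ((V.card : ℝ) * 2 ^ j ≤ (n : ℝ)) ∧
      ((n : ℝ) / 2 ^ j - (V.card : ℝ)
        ≤ (1 + Real.sqrt 2) * Real.sqrt (2 * Real.log 2 * n * k / 2 ^ j)) := by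
  classical
  induction j with
  | zero =>
    refine ⟨Finset.univ, fun c _ => ?_, ?_, ?_⟩
    · have : wtOn Finset.univ c = hammingNorm c := rfl
      omega
    · simp
    · have h0 : (n : ℝ) / 2 ^ 0 - ((Finset.univ : Finset (Fin n)).card : ℝ) = 0 := by
        simp
      rw [h0]
      positivity
  | succ j ih =>
    obtain ⟨V, hwt, hsize, hloss⟩ := ih
    obtain ⟨W, hWV, hWwt, hWcard, hWlower⟩ := half_step C hk0 hCcard V
    have h2j : (0:ℝ) < 2 ^ j := by positivity
    have hlog0 : (0:ℝ) ≤ Real.log 2 := Real.log_nonneg one_le_two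
    have hk0' : (0:ℝ) ≤ (k : ℝ) := by positivity
    refine ⟨W, fun c hc => ?_, ?_, ?_⟩
    · have h1 := hWwt c hc
      have h2 := hwt c hc
      calc 2 ^ (j+1) * wtOn W c = 2 ^ j * (2 * wtOn W c) := by ring
        _ ≤ 2 ^ j * wtOn V c := Nat.mul_le_mul_left _ h1
        _ ≤ hammingNorm c := h2
    · have h1 : (2:ℝ) * (W.card : ℝ) ≤ (V.card : ℝ) := by exact_mod_cast hWcard
      calc (W.card : ℝ) * 2 ^ (j+1) = (2 * (W.card : ℝ)) * 2 ^ j := by ring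
        _ ≤ (V.card : ℝ) * 2 ^ j := by
            exact mul_le_mul_of_nonneg_right h1 (by positivity)
        _ ≤ (n : ℝ) := hsize
    · set tj := Real.sqrt (2 * Real.log 2 * n * k / 2 ^ j) with htj
      have htj0 : 0 ≤ tj := Real.sqrt_nonneg _
      have hTm : Real.sqrt (2 * Real.log 2 * V.card * k) ≤ tj := by
        apply Real.sqrt_le_sqrt
        have hm' : (V.card : ℝ) ≤ (n : ℝ) / 2 ^ j := by
          rw [le_div_iff₀ h2j]; exact hsize
        calc 2 * Real.log 2 * (V.card : ℝ) * k
            ≤ 2 * Real.log 2 * ((n : ℝ) / 2 ^ j) * k := by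
              apply mul_le_mul_of_nonneg_right _ hk0'
              apply mul_le_mul_of_nonneg_left hm' (by positivity)
          _ = 2 * Real.log 2 * n * k / 2 ^ j := by ring
      have htj1 : Real.sqrt (2 * Real.log 2 * n * k / 2 ^ (j+1)) = tj / Real.sqrt 2 := by
        rw [htj, ← Real.sqrt_div (by positivity)]
        congr 1
        rw [pow_succ]
        ring
      rw [htj1]
      have hs0 : (0:ℝ) < Real.sqrt 2 := Real.sqrt_pos.2 (by norm_num)
      have hs2 : Real.sqrt 2 ^ 2 = 2 := Real.sq_sqrt (by norm_num)
      -- combine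
      have hstep : (n : ℝ) / 2 ^ (j+1) - (W.card : ℝ)
          ≤ ((n : ℝ) / 2 ^ j - (V.card : ℝ)) / 2 + tj / 2 := by
        have h5 : ((V.card : ℝ) - Real.sqrt (2 * Real.log 2 * V.card * k)) / 2
            ≤ (W.card : ℝ) := hWlower
        have h6 : ((V.card : ℝ) - tj) / 2 ≤ (W.card : ℝ) := by linarith
        have h7 : (n : ℝ) / 2 ^ (j+1) = ((n : ℝ) / 2 ^ j) / 2 := by
          rw [pow_succ]; ring
        rw [h7]; linarith
      have hfin : ((n : ℝ) / 2 ^ j - (V.card : ℝ)) / 2 + tj / 2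
          ≤ (1 + Real.sqrt 2) * (tj / Real.sqrt 2) := by
        have h8 : ((n : ℝ) / 2 ^ j - (V.card : ℝ)) / 2 + tj / 2
            ≤ ((1 + Real.sqrt 2) * tj) / 2 + tj / 2 := by linarith
        have h9 : ((1 + Real.sqrt 2) * tj) / 2 + tj / 2
            = (1 + Real.sqrt 2) * (tj / Real.sqrt 2) := by
          field_simp
          linear_combination tj * hs2
        linarith
      linarith

end Sparsify


/-- For `α = 1 - 1/2^ℓ`, a `k`-dimensional linear code `C ⊆ 𝔽₂ⁿ` with
`0 < k ≤ n` has an unweighted one-sided `α`-sparsifier of size at most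
`α n + c √(n k)` where `c = √(ln 2) (1 + √2)`. -/
theorem small_alpha_sparsifier (n k : ℕ) (C : Submodule (ZMod 2) (Fin n → ZMod 2))
    (hk : Module.finrank (ZMod 2) C = k) (hk0 : 0 < k) (hkn : k ≤ n)
    (ℓ : ℕ) (hℓ : 0 < ℓ) :
    ∃ S : Finset (Fin n), IsSparsifier C (1 - 1 / 2 ^ ℓ) S ∧
      (S.card : ℝ) ≤ (1 - 1 / 2 ^ ℓ) * n +
        Real.sqrt (Real.log 2) * (1 + Real.sqrt 2) * Real.sqrt ((n : ℝ) * k) := by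
  classical
  obtain ⟨V, hwt, hsize, hloss⟩ := Sparsify.iterate C hk0 (Sparsify.card_CF C hk) ℓ
  have h2ℓ : (0:ℝ) < 2 ^ ℓ := by positivity
  have hVuniv : V ⊆ Finset.univ := Finset.subset_univ V
  have hcardV : V.card ≤ n := by
    have := Finset.card_le_card hVuniv
    simpa using this
  refine ⟨Finset.univ \ V, ?_, ?_⟩
  · intro c hc
    have h1 := hwt c hc
    have hpart : wtOn V c + wtOn (Finset.univ \ V) c = hammingNorm c := by
      unfold wtOn
      rw [← Finset.card_union_of_disjoint
        (Finset.disjoint_filter_filter Finset.disjoint_sdiff),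
        ← Finset.filter_union, Finset.union_sdiff_of_subset hVuniv]
      rfl
    have h1' : (2:ℝ) ^ ℓ * (wtOn V c : ℝ) ≤ (hammingNorm c : ℝ) := by exact_mod_cast h1
    have hpart' : (wtOn V c : ℝ) + (wtOn (Finset.univ \ V) c : ℝ)
        = (hammingNorm c : ℝ) := by exact_mod_cast hpart
    have hW : (wtOn V c : ℝ) ≤ (hammingNorm c : ℝ) / 2 ^ ℓ := by
      rw [le_div_iff₀ h2ℓ]
      nlinarith [h1']
    have hHnn : (0:ℝ) ≤ (hammingNorm c : ℝ) := by positivity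
    have : (1 - 1 / 2 ^ ℓ) * (hammingNorm c : ℝ)
        = (hammingNorm c : ℝ) - (hammingNorm c : ℝ) / 2 ^ ℓ := by ring
    rw [this]
    linarith
  · have hcard : (Finset.univ \ V).card = n - V.card := by
      rw [Finset.card_sdiff_of_subset hVuniv]
      simp
    have hcast : ((Finset.univ \ V).card : ℝ) = (n : ℝ) - (V.card : ℝ) := by
      rw [hcard]
      push_cast [hcardV]
      ring
    rw [hcast]
    have hA0 : (0:ℝ) ≤ 2 * Real.log 2 * n * k := by
      positivity
    have hmono : Real.sqrt (2 * Real.log 2 * n * k / 2 ^ ℓ)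
        ≤ Real.sqrt (2 * Real.log 2 * n * k / 2) := by
      apply Real.sqrt_le_sqrt
      apply div_le_div_of_nonneg_left hA0 (by norm_num) ?_
      calc (2:ℝ) = 2 ^ 1 := by norm_num
        _ ≤ 2 ^ ℓ := by
          apply pow_le_pow_right₀ (by norm_num) hℓ
    have hval : Real.sqrt (2 * Real.log 2 * n * k / 2)
        = Real.sqrt (Real.log 2) * Real.sqrt ((n : ℝ) * k) := by
      rw [show 2 * Real.log 2 * (n:ℝ) * (k:ℝ) / 2 = Real.log 2 * ((n:ℝ) * (k:ℝ)) by ring]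
      exact Real.sqrt_mul (Real.log_nonneg one_le_two) _
    have hloss2 : (n : ℝ) / 2 ^ ℓ - (V.card : ℝ)
        ≤ (1 + Real.sqrt 2) * (Real.sqrt (Real.log 2) * Real.sqrt ((n : ℝ) * k)) := by
      calc (n : ℝ) / 2 ^ ℓ - (V.card : ℝ)
          ≤ (1 + Real.sqrt 2) * Real.sqrt (2 * Real.log 2 * n * k / 2 ^ ℓ) := hloss
        _ ≤ (1 + Real.sqrt 2) * (Real.sqrt (Real.log 2) * Real.sqrt ((n : ℝ) * k)) := by
            rw [← hval]
            apply mul_le_mul_of_nonneg_left hmono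
            positivity
    have hdecomp : (n : ℝ) - (V.card : ℝ)
        = ((n : ℝ) - (n : ℝ) / 2 ^ ℓ) + ((n : ℝ) / 2 ^ ℓ - (V.card : ℝ)) := by ring
    rw [hdecomp]
    have : ((n : ℝ) - (n : ℝ) / 2 ^ ℓ) = (1 - 1 / 2 ^ ℓ) * n := by ring
    rw [this]
    have : Real.sqrt (Real.log 2) * (1 + Real.sqrt 2) * Real.sqrt ((n : ℝ) * k)
        = (1 + Real.sqrt 2) * (Real.sqrt (Real.log 2) * Real.sqrt ((n : ℝ) * k)) := by ring
    rw [this]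
    linarith
end

section
/- Let G = (V, E) be a finite graph with V nonempty. Then the number of subsets T ⊆ E that are 1/2-thin with respect to G is at least 2^(|E| − (|V| − 1)). Equivalently, a uniformly random subset T ⊆ E is 1/2-thin with probability at least 2^(1−|V|). -/
/-- The cut `δ(A)`: the set of edges of `G` with exactly one endpoint in `A`. -/
def cutEdges {V : Type*} (G : SimpleGraph V) (A : Set V) : Set (Sym2 V) :=
  {e | e ∈ G.edgeSet ∧ ∃ u v, e = s(u, v) ∧ u ∈ A ∧ v ∉ A}

/-- A set of edges `T` is `α`-thin with respect to `G` if for every vertex set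
`A`, `|T ∩ δ(A)| ≤ α · |δ(A)|`. -/
def IsThin {V : Type*} (G : SimpleGraph V) (α : ℝ) (T : Set (Sym2 V)) : Prop :=
  ∀ A : Set V, ((T ∩ cutEdges G A).ncard : ℝ) ≤ α * (cutEdges G A).ncard

section Aux

variable {V : Type*} {G : SimpleGraph V}

lemma cut_subset (A : Set V) : cutEdges G A ⊆ G.edgeSet := fun _ he => he.1

lemma mem_cut_iff {u v : V} {A : Set V} :
    s(u, v) ∈ cutEdges G A ↔ G.Adj u v ∧ ((u ∈ A ∧ v ∉ A) ∨ (v ∈ A ∧ u ∉ A)) := by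
  constructor
  · rintro ⟨he, a, b, hab, ha, hb⟩
    rw [Sym2.eq_iff] at hab
    rw [SimpleGraph.mem_edgeSet] at he
    rcases hab with ⟨rfl, rfl⟩ | ⟨rfl, rfl⟩
    · exact ⟨he, Or.inl ⟨ha, hb⟩⟩
    · exact ⟨he, Or.inr ⟨ha, hb⟩⟩
  · rintro ⟨he, ⟨ha, hb⟩ | ⟨ha, hb⟩⟩
    · exact ⟨he, u, v, rfl, ha, hb⟩
    · exact ⟨he, v, u, Sym2.eq_swap, ha, hb⟩

lemma cut_symmDiff (A B : Set V) :
    symmDiff (cutEdges G A) (cutEdges G B) = cutEdges G (symmDiff A B) := by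
  ext e
  induction e using Sym2.ind with
  | _ u v =>
    rw [Set.mem_symmDiff, mem_cut_iff, mem_cut_iff, mem_cut_iff]
    simp only [Set.mem_symmDiff]
    tauto

lemma cut_compl (A : Set V) : cutEdges G Aᶜ = cutEdges G A := by
  ext e
  induction e using Sym2.ind with
  | _ u v =>
    rw [mem_cut_iff, mem_cut_iff]
    simp only [Set.mem_compl_iff]
    tauto

lemma cut_empty : cutEdges G (∅ : Set V) = ∅ := by
  ext e
  induction e using Sym2.ind with
  | _ u v => simp [mem_cut_iff]

lemma setCompl_ne_self [Nonempty V] (A : Set V) : A ≠ Aᶜ := by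
  obtain ⟨w⟩ := ‹Nonempty V›
  intro h
  by_cases hw : w ∈ A
  · exact (h ▸ hw : w ∈ Aᶜ) hw
  · exact hw (h.symm ▸ (hw : w ∈ Aᶜ))

end Aux

section Count

variable {V : Type*} [Fintype V] (G : SimpleGraph V)

/-- The size of the cut space is at most `2 ^ (|V| - 1)`. -/
lemma cut_range_card [Nonempty V] :
    (Set.range (cutEdges G)).ncard * 2 ≤ 2 ^ (Fintype.card V - 1) * 2 := by
  classical
  have key : 2 * (Set.range (cutEdges G)).ncard ≤ 2 ^ Fintype.card V := by
    have hle := Finset.mul_card_image_le_card (f := cutEdges G) Finset.univ 2 ?_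
    · have himg : (Set.range (cutEdges G)).ncard
          = (Finset.univ.image (cutEdges G)).card := by
        rw [← Set.ncard_coe_finset]
        congr 1
        rw [Finset.coe_image, Finset.coe_univ, Set.image_univ]
      rw [himg]
      calc 2 * (Finset.univ.image (cutEdges G)).card ≤ Finset.univ.card := hle
        _ = 2 ^ Fintype.card V := by
            rw [Finset.card_univ, Fintype.card_set]
    · intro b hb
      obtain ⟨A, _, rfl⟩ := Finset.mem_image.mp hb
      apply Finset.one_lt_card.mpr
      refine ⟨A, ?_, Aᶜ, ?_, setCompl_ne_self A⟩
      · simp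
      · simp [cut_compl]
  have hpos : 1 ≤ Fintype.card V := Fintype.card_pos
  have : 2 ^ Fintype.card V = 2 ^ (Fintype.card V - 1) * 2 := by
    rw [← pow_succ]
    congr 1
    omega
  omega

/-- Every class mod the cut space contains a `1/2`-thin set. -/
lemma exists_thin_rep (T : Set (Sym2 V)) (hT : T ⊆ G.edgeSet) :
    ∃ T₀, T₀ ⊆ G.edgeSet ∧ symmDiff T T₀ ∈ Set.range (cutEdges G) ∧
      IsThin G (1 / 2) T₀ := by
  classical
  set S : Set (Set (Sym2 V)) :=
    {T' | T' ⊆ G.edgeSet ∧ symmDiff T T' ∈ Set.range (cutEdges G)} with hS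
  have hTS : T ∈ S := by
    refine ⟨hT, ⟨∅, ?_⟩⟩
    rw [symmDiff_self, cut_empty]
    rfl
  set M : Set ℕ := Set.ncard '' S with hM
  have hMne : M.Nonempty := ⟨T.ncard, T, hTS, rfl⟩
  obtain ⟨T₀, hT₀S, hT₀card⟩ := Nat.sInf_mem hMne
  have hmin : ∀ T' ∈ S, T₀.ncard ≤ T'.ncard := by
    intro T' hT'
    rw [hT₀card]
    exact Nat.sInf_le ⟨T', hT', rfl⟩
  refine ⟨T₀, hT₀S.1, hT₀S.2, ?_⟩
  intro A
  by_contra hcon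
  push_neg at hcon
  set c := cutEdges G A with hc
  have hEfin : (G.edgeSet).Finite := Set.toFinite _
  have hT₀fin : T₀.Finite := hEfin.subset hT₀S.1
  have hcfin : c.Finite := hEfin.subset (cut_subset A)
  have hgt : c.ncard < 2 * (T₀ ∩ c).ncard := by
    have : (c.ncard : ℝ) < 2 * (T₀ ∩ c).ncard := by nlinarith [hcon]
    exact_mod_cast this
  set T₁ := symmDiff T₀ c with hT₁
  have hT₁sub : T₁ ⊆ G.edgeSet := by
    rw [hT₁, Set.symmDiff_def]
    exact Set.union_subset (fun x hx => hT₀S.1 hx.1) (fun x hx => cut_subset A hx.1)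
  have hT₁S : T₁ ∈ S := by
    refine ⟨hT₁sub, ?_⟩
    obtain ⟨B, hB⟩ := hT₀S.2
    refine ⟨symmDiff B A, ?_⟩
    rw [← cut_symmDiff, hB, hT₁, symmDiff_assoc]
  have hdj1 : Disjoint (T₀ \ c) (T₀ ∩ c) :=
    Set.disjoint_of_subset_right Set.inter_subset_right Set.disjoint_sdiff_left
  have hd1 : (T₀ \ c).ncard + (T₀ ∩ c).ncard = T₀.ncard := by
    rw [← Set.ncard_union_eq hdj1 (hT₀fin.diff (t := c)) (hT₀fin.inter_of_left c),
      Set.diff_union_inter]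
  have hdj2 : Disjoint (c \ T₀) (c ∩ T₀) :=
    Set.disjoint_of_subset_right Set.inter_subset_right Set.disjoint_sdiff_left
  have hd2 : (c \ T₀).ncard + (T₀ ∩ c).ncard = c.ncard := by
    rw [Set.inter_comm T₀ c, ← Set.ncard_union_eq hdj2 (hcfin.diff (t := T₀))
      (hcfin.inter_of_left T₀), Set.diff_union_inter]
  have hdj3 : Disjoint (T₀ \ c) (c \ T₀) :=
    Set.disjoint_of_subset_right Set.diff_subset Set.disjoint_sdiff_left
  have hsplit : T₁.ncard = (T₀ \ c).ncard + (c \ T₀).ncard := by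
    rw [hT₁, Set.symmDiff_def]
    exact Set.ncard_union_eq hdj3 (hT₀fin.diff (t := c)) (hcfin.diff (t := T₀))
  have hlt : T₁.ncard < T₀.ncard := by omega
  exact absurd (hmin T₁ hT₁S) (by omega)

end Count

/-- A finite graph on a nonempty vertex set has at least `2^(|E| - (|V| - 1))`
many `1/2`-thin subgraphs; equivalently, a uniformly random subset of the edges
is `1/2`-thin with probability at least `2^(1 - |V|)`. -/
theorem num_half_thin_subgraphs {V : Type*} [Fintype V] [Nonempty V]
    (G : SimpleGraph V) :
    (2 : ℝ) ^ ((G.edgeSet.ncard : ℤ) - ((Fintype.card V : ℤ) - 1)) ≤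
      ({T : Set (Sym2 V) | T ⊆ G.edgeSet ∧ IsThin G (1 / 2) T}.ncard : ℝ) ∧
    (2 : ℝ) ^ (1 - (Fintype.card V : ℤ)) ≤
      ({T : Set (Sym2 V) | T ⊆ G.edgeSet ∧ IsThin G (1 / 2) T}.ncard : ℝ) /
        2 ^ G.edgeSet.ncard := by
  classical
  set thin := {T : Set (Sym2 V) | T ⊆ G.edgeSet ∧ IsThin G (1 / 2) T} with hthin
  set C := Set.range (cutEdges G) with hC
  set P := {T : Set (Sym2 V) | T ⊆ G.edgeSet} with hP
  set m := G.edgeSet.ncard with hm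
  set n := Fintype.card V with hn
  have hsurj : ∃ f : (↥thin × ↥C) → ↥P, Function.Surjective f := by
    refine ⟨fun p => ⟨symmDiff p.1.1 p.2.1, ?_⟩, ?_⟩
    · rcases p with ⟨⟨T₀, hT₀⟩, ⟨c, hcc⟩⟩
      obtain ⟨A, rfl⟩ := hcc
      rw [Set.symmDiff_def]
      exact Set.union_subset (fun x hx => hT₀.1 hx.1) (fun x hx => cut_subset A hx.1)
    · rintro ⟨T, hT⟩
      obtain ⟨T₀, hsub, hmem, hthin₀⟩ := exists_thin_rep G T hT
      refine ⟨⟨⟨T₀, ⟨hsub, hthin₀⟩⟩, ⟨symmDiff T T₀, hmem⟩⟩, ?_⟩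
      simp only [Subtype.mk.injEq]
      rw [symmDiff_comm T T₀, symmDiff_symmDiff_cancel_left]
  obtain ⟨f, hf⟩ := hsurj
  have hPcard : Nat.card ↥P = 2 ^ m := by
    have e1 : ↥P ≃ Set ↥(G.edgeSet) := Equiv.Set.powerset G.edgeSet
    rw [Nat.card_congr e1, Nat.card_eq_fintype_card, Fintype.card_set]
    congr 1
    rw [hm, ← Nat.card_coe_set_eq, Nat.card_eq_fintype_card]
  have hkey : 2 ^ m ≤ thin.ncard * 2 ^ (n - 1) := by
    have h1 : Nat.card ↥P ≤ Nat.card (↥thin × ↥C) := Nat.card_le_card_of_surjective f hf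
    rw [hPcard, Nat.card_prod, Nat.card_coe_set_eq, Nat.card_coe_set_eq] at h1
    have h2 : C.ncard * 2 ≤ 2 ^ (n - 1) * 2 := cut_range_card G
    have h3 : C.ncard ≤ 2 ^ (n - 1) := by omega
    calc 2 ^ m ≤ thin.ncard * C.ncard := h1
      _ ≤ thin.ncard * 2 ^ (n - 1) := Nat.mul_le_mul_left _ h3
  have hkeyR : (2 : ℝ) ^ m ≤ (thin.ncard : ℝ) * 2 ^ (n - 1) := by exact_mod_cast hkey
  have hn1 : 1 ≤ n := Fintype.card_pos
  have hz : ((n : ℤ) - 1) = ((n - 1 : ℕ) : ℤ) := by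
    have : (n : ℤ) = ((n - 1 : ℕ) : ℤ) + 1 := by
      have := Nat.succ_pred_eq_of_pos hn1
      omega
    omega
  have hpow : ∀ k : ℕ, ((2 : ℝ) ^ (k : ℤ)) = 2 ^ k := fun k => zpow_natCast 2 k
  have h2pos : ∀ k : ℕ, (0 : ℝ) < 2 ^ k := fun k => by positivity
  have hmain : (2 : ℝ) ^ ((m : ℤ) - ((n : ℤ) - 1)) ≤ (thin.ncard : ℝ) := by
    rw [hz, zpow_sub₀ (by norm_num : (2:ℝ) ≠ 0), hpow, hpow,
      div_le_iff₀ (h2pos (n - 1))]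
    exact hkeyR
  refine ⟨hmain, ?_⟩
  have hrw : (1 : ℤ) - n = ((m : ℤ) - ((n : ℤ) - 1)) - m := by ring
  rw [hrw, zpow_sub₀ (by norm_num : (2:ℝ) ≠ 0), hpow]
  gcongr
end

section
/- Let C ⊆ F_2^n be a linear code that is non-degenerate, i.e., for every coordinate i ∈ [n] there exists c ∈ C with c_i ≠ 0. Then for any α ∈ [0,1], every unweighted one-sided α-sparsifier S ⊆ [n] of C satisfies |S| ≥ α·n. -/
lemma zmod2_key (x y : ZMod 2) (hy : y ≠ 0) : x + y = 0 ↔ x ≠ 0 := by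
  revert x y; decide

lemma fiber_card {n : ℕ} (C : Submodule (ZMod 2) (Fin n → ZMod 2))
    [Fintype C] (i : Fin n) (h : ∃ c ∈ C, c i ≠ 0) :
    2 * (Finset.univ.filter fun c : C => (c : Fin n → ZMod 2) i ≠ 0).card
      = Fintype.card C := by
  classical
  obtain ⟨c0, hc0, hi⟩ := h
  set d : C := ⟨c0, hc0⟩ with hd
  have hdd : ∀ c : C, c + d + d = c := by
    intro c
    rw [add_assoc]
    convert add_zero c using 2
    apply Subtype.ext
    show c0 + c0 = 0
    funext j
    exact CharTwo.add_self_eq_zero _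
  have hab : (Finset.univ.filter fun c : C => (c : Fin n → ZMod 2) i ≠ 0).card
      + (Finset.univ.filter fun c : C => ¬ (c : Fin n → ZMod 2) i ≠ 0).card
      = Fintype.card C :=
    Finset.card_filter_add_card_filter_not _
  have key : (Finset.univ.filter fun c : C => (c : Fin n → ZMod 2) i ≠ 0).card
      = (Finset.univ.filter fun c : C => ¬ (c : Fin n → ZMod 2) i ≠ 0).card := by
    refine Finset.card_nbij' (fun c => c + d) (fun c => c + d) ?_ ?_ ?_ ?_
    · intro c hc
      simp only [Finset.mem_coe, Finset.mem_filter, Finset.mem_univ, true_and, not_not] at hc ⊢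
      show (c : Fin n → ZMod 2) i + c0 i = 0
      exact (zmod2_key _ _ hi).mpr hc
    · intro c hc
      simp only [Finset.mem_coe, Finset.mem_filter, Finset.mem_univ, true_and, not_not] at hc ⊢
      show (c : Fin n → ZMod 2) i + c0 i ≠ 0
      intro h0
      exact ((zmod2_key _ _ hi).mp h0) hc
    · intro c _; exact hdd c
    · intro c _; exact hdd c
  omega

/-- For a non-degenerate linear code `C ⊆ 𝔽₂ⁿ` (every coordinate is nonzero in
some codeword), every unweighted one-sided `α`-sparsifier has size at least
`α n`. -/
theorem sparsifier_lower_bound (n : ℕ) (C : Submodule (ZMod 2) (Fin n → ZMod 2))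
    (hnd : ∀ i : Fin n, ∃ c ∈ C, c i ≠ 0)
    (α : ℝ) (hα : α ∈ Set.Icc (0 : ℝ) 1)
    (S : Finset (Fin n)) (hS : IsSparsifier C α S) :
    α * n ≤ (S.card : ℝ) := by
  classical
  haveI : Fintype C := Fintype.ofFinite C
  rcases Nat.eq_zero_or_pos n with hn | hn
  · subst hn
    simp
  set k := Fintype.card C / 2 with hk
  have hk2 : ∀ i : Fin n, (Finset.univ.filter fun c : C => (c : Fin n → ZMod 2) i ≠ 0).card = k := by
    intro i
    have := fiber_card C i (hnd i)
    omega
  have hkpos : 0 < k := by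
    obtain ⟨c0, hc0, hne⟩ := hnd ⟨0, hn⟩
    have hmem : (⟨c0, hc0⟩ : C) ∈ Finset.univ.filter
        fun c : C => (c : Fin n → ZMod 2) ⟨0, hn⟩ ≠ 0 := by simp [hne]
    have := Finset.card_pos.mpr ⟨_, hmem⟩
    have := hk2 ⟨0, hn⟩
    omega
  have hsumS : ∑ c : C, wtOn S (c : Fin n → ZMod 2) = S.card * k := by
    unfold wtOn
    simp_rw [Finset.card_filter]
    rw [Finset.sum_comm]
    simp_rw [← Finset.card_filter]
    rw [Finset.sum_congr rfl (fun i _ => hk2 i)]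
    simp [mul_comm]
  have hsumN : ∑ c : C, hammingNorm (c : Fin n → ZMod 2) = n * k := by
    unfold hammingNorm
    simp_rw [Finset.card_filter]
    rw [Finset.sum_comm]
    simp_rw [← Finset.card_filter]
    rw [Finset.sum_congr rfl (fun i _ => hk2 i)]
    simp [mul_comm]
  have hle : α * ((n * k : ℕ) : ℝ) ≤ ((S.card * k : ℕ) : ℝ) := by
    rw [← hsumS, ← hsumN]
    push_cast
    rw [Finset.mul_sum]
    exact Finset.sum_le_sum fun c _ => hS c c.2
  have hkR : (0:ℝ) < k := by exact_mod_cast hkpos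
  push_cast at hle
  nlinarith
end
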